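/- arXiv:0804.3194 — 4 statements merged into one kernel-verified Lean document; each statement's English description precedes it below -/
import Mathlib

section
/- Let $F/F_0$ be an unramified quadratic extension of non-archimedean local fields of odd residual characteristic with common uniformizer $\varpi$. Let $V$ be a 2-dimensional $F$-vector space with the anisotropic hermitian form $f_0(x,y) = \overline{x}_1 y_1 + \varpi \overline{x}_2 y_2$ (in a fixed basis $e_1, e_2$). Then the lattice $L = \mathfrak{o}_F e_1 \oplus \mathfrak{o}_F e_2$ is the unique $\mathfrak{o}_F$-lattice in $V$ satisfying $L^\# \supseteq L \supseteq \varpi L^\#$, where $L^\# = \{v \in V \mid f_0(v, L) \subseteq \mathfrak{o}_F\}$. -/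
/-- In the 2-dimensional anisotropic hermitian space
`(V, f₀)`, `f₀(x,y) = x̄₁y₁ + ϖ x̄₂y₂`, over the unramified quadratic extension
`F/F₀`, the lattice `L = 𝔬_F e₁ ⊕ 𝔬_F e₂` is the unique `𝔬_F`-lattice with
`L^# ⊇ L ⊇ ϖ L^#`, where `L^# = {v | f₀(v, L) ⊆ 𝔬_F}`. -/
theorem stmt_1
    (F : Type) [Field F]
    (σ : F →+* F) (hσ2 : ∀ x, σ (σ x) = x) (hσne : σ ≠ RingHom.id F)
    (O : Subring F) (hval : ∀ x : F, x ≠ 0 → x ∈ O ∨ x⁻¹ ∈ O)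
    (hOσ : ∀ x ∈ O, σ x ∈ O)
    (hodd : ∃ t ∈ O, 2 * t = 1)
    (ϖ : F) (hϖO : ϖ ∈ O) (hϖ0 : ϖ ≠ 0) (hϖnu : ∀ y ∈ O, ϖ * y ≠ 1)
    (hϖσ : σ ϖ = ϖ)
    (hunif : ∀ x : F, x ≠ 0 → ∃ (n : ℤ) (u : F),
      u ∈ O ∧ (∃ w ∈ O, u * w = 1) ∧ x = u * ϖ ^ n)
    (f : (Fin 2 → F) → (Fin 2 → F) → F)
    (hf : ∀ v w, f v w = σ (v 0) * w 0 + ϖ * (σ (v 1) * w 1))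
    (L : Set (Fin 2 → F))
    (hlat : ∃ b0 b1 : Fin 2 → F,
      (∀ x : Fin 2 → F, ∃ c d : F, x = c • b0 + d • b1) ∧
      (∀ c d : F, c • b0 + d • b1 = 0 → c = 0 ∧ d = 0) ∧
      L = {x | ∃ c d : F, c ∈ O ∧ d ∈ O ∧ x = c • b0 + d • b1})
    (hsub : L ⊆ {v | ∀ w ∈ L, f v w ∈ O})
    (hsup : ∀ v ∈ {v : Fin 2 → F | ∀ w ∈ L, f v w ∈ O}, ϖ • v ∈ L) :
    L = {v : Fin 2 → F | v 0 ∈ O ∧ v 1 ∈ O} := by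
  classical
  obtain ⟨b0, b1, hspan, hind, hLdef⟩ := hlat
  -- basic valuation-ring facts
  have hinvϖ : ϖ⁻¹ ∉ (O : Set F) := fun h => hϖnu _ h (mul_inv_cancel₀ hϖ0)
  have hpowO : ∀ n : ℤ, 0 ≤ n → ϖ ^ n ∈ O := by
    intro n hn
    lift n to ℕ using hn
    rw [zpow_natCast]
    exact pow_mem hϖO n
  -- unit predicate
  have hmem_of : ∀ (u : F) (n : ℤ), u ∈ O → 0 ≤ n → u * ϖ ^ n ∈ O :=
    fun u n hu hn => mul_mem hu (hpowO n hn)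
  have hval_of : ∀ (u : F) (n : ℤ), u ≠ 0 → u⁻¹ ∈ O → u * ϖ ^ n ∈ O → 0 ≤ n := by
    intro u n hu0 huinv h
    by_contra hn
    push_neg at hn
    have h1 : ϖ ^ n ∈ O := by
      have h2 := mul_mem huinv h
      rwa [← mul_assoc, inv_mul_cancel₀ hu0, one_mul] at h2
    have h2 : ϖ ^ (-1 - n) ∈ O := hpowO _ (by omega)
    have h3 : ϖ⁻¹ ∈ O := by
      have h4 := mul_mem h1 h2
      rwa [← zpow_add₀ hϖ0, show n + (-1 - n) = -1 by ring, zpow_neg_one] at h4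
    exact hinvϖ h3
  have hunit_ne : ∀ u : F, u ≠ 0 → u⁻¹ ∈ O → ∀ t ∈ O, u ≠ ϖ * t := by
    intro u hu0 huinv t ht heq
    refine hϖnu (t * u⁻¹) (mul_mem ht huinv) ?_
    rw [← mul_assoc, ← heq, mul_inv_cancel₀ hu0]
  have hB : ∀ x ∈ O, x ≠ 0 → x⁻¹ ∈ O ∨ ∃ t ∈ O, x = ϖ * t := by
    intro x hx hx0
    obtain ⟨n, u, huO, ⟨w, hw, huw⟩, hxu⟩ := hunif x hx0
    have hu0 : u ≠ 0 := fun h => by simp [h] at huw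
    have hw' : w = u⁻¹ := eq_inv_of_mul_eq_one_right huw
    rcases le_or_gt n 0 with hn | hn
    · left
      have hxi : x⁻¹ = w * ϖ ^ (-n) := by
        rw [hxu, mul_inv, ← zpow_neg, hw']
      rw [hxi]
      exact mul_mem hw (hpowO _ (by omega))
    · right
      refine ⟨u * ϖ ^ (n - 1), mul_mem huO (hpowO _ (by omega)), ?_⟩
      have hsplit : ϖ ^ n = ϖ * ϖ ^ (n - 1) := by
        rw [← zpow_one_add₀ hϖ0]
        congr 1
        omega
      rw [hxu, hsplit]
      ring
  have hUadd : ∀ u t : F, u ≠ 0 → u⁻¹ ∈ O → u ∈ O → t ∈ O →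
      (u + ϖ * t ≠ 0 ∧ (u + ϖ * t) ∈ O ∧ (u + ϖ * t)⁻¹ ∈ O) := by
    intro u t hu0 huinv huO ht
    have hs0 : u + ϖ * t ≠ 0 := by
      intro h
      refine hunit_ne u hu0 huinv (-t) (neg_mem ht) ?_
      have h1 : u = -(ϖ * t) := eq_neg_of_add_eq_zero_left h
      rw [h1]; ring
    have hsO : u + ϖ * t ∈ O := add_mem huO (mul_mem hϖO ht)
    refine ⟨hs0, hsO, ?_⟩
    rcases hB _ hsO hs0 with h | ⟨t', ht', heq⟩
    · exact h
    · exfalso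
      refine hunit_ne u hu0 huinv (t' - t) (sub_mem ht' ht) ?_
      linear_combination heq
  have hsum_nm : ∀ (u u' : F) (a b : ℤ), u ≠ 0 → u⁻¹ ∈ O → u ∈ O →
      u' ∈ O → a < b → a < 0 → u * ϖ ^ a + u' * ϖ ^ b ∉ (O : Set F) := by
    intro u u' a b hu0 huinv huO hu'O hab ha h
    have h1 : ϖ * ϖ ^ (b - a - 1) * ϖ ^ a = ϖ ^ b := by
      rw [mul_assoc, ← zpow_add₀ hϖ0, ← zpow_one_add₀ hϖ0]
      congr 1
      omega
    have key : u * ϖ ^ a + u' * ϖ ^ b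
        = (u + ϖ * (u' * ϖ ^ (b - a - 1))) * ϖ ^ a := by
      linear_combination (-u') * h1
    obtain ⟨hs0, hsO, hsinv⟩ :=
      hUadd u (u' * ϖ ^ (b - a - 1)) hu0 huinv huO (mul_mem hu'O (hpowO _ (by omega)))
    rw [key] at h
    exact absurd (hval_of _ _ hs0 hsinv h) (by omega)
  -- representation with units
  have hrepr : ∀ x : F, x ≠ 0 → ∃ (u : F) (n : ℤ),
      u ≠ 0 ∧ u ∈ O ∧ u⁻¹ ∈ O ∧ x = u * ϖ ^ n := by
    intro x hx
    obtain ⟨n, u, huO, ⟨w, hw, huw⟩, hxu⟩ := hunif x hx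
    have hu0 : u ≠ 0 := fun h => by simp [h] at huw
    have hw' : w = u⁻¹ := eq_inv_of_mul_eq_one_right huw
    exact ⟨u, n, hu0, huO, hw' ▸ hw, hxu⟩
  have hσ0 : ∀ x : F, x ≠ 0 → σ x ≠ 0 := by
    intro x hx h
    have h2 := hσ2 x
    rw [h, map_zero] at h2
    exact hx h2.symm
  have hnorm : ∀ x : F, x ≠ 0 → ∃ (u : F) (n : ℤ),
      u ≠ 0 ∧ u ∈ O ∧ u⁻¹ ∈ O ∧ x = u * ϖ ^ n ∧
      (σ u * u ≠ 0 ∧ (σ u * u) ∈ O ∧ (σ u * u)⁻¹ ∈ O) ∧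
      σ x * x = (σ u * u) * ϖ ^ (2 * n) := by
    intro x hx
    obtain ⟨u, n, hu0, huO, huinv, hxu⟩ := hrepr x hx
    refine ⟨u, n, hu0, huO, huinv, hxu, ⟨mul_ne_zero (hσ0 u hu0) hu0,
      mul_mem (hOσ u huO) huO, ?_⟩, ?_⟩
    · rw [mul_inv, ← map_inv₀]
      exact mul_mem (hOσ _ huinv) huinv
    · rw [hxu, map_mul, map_zpow₀, hϖσ, show (2 * n) = n + n by ring,
        zpow_add₀ hϖ0]
      ring
  -- key integrality lemma
  have hinteg : ∀ x y : F, σ x * x + ϖ * (σ y * y) ∈ O → x ∈ O ∧ y ∈ O := by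
    intro x y h
    by_cases hx : x = 0
    · subst hx
      rw [map_zero, zero_mul, zero_add] at h
      refine ⟨zero_mem O, ?_⟩
      by_cases hy : y = 0
      · subst hy
        exact zero_mem O
      · obtain ⟨u, b, hu0, huO, huinv, hyu, ⟨hv0, hvO, hvinv⟩, hyy⟩ := hnorm y hy
        have hform : ϖ * (σ y * y) = (σ u * u) * ϖ ^ (2 * b + 1) := by
          rw [hyy, zpow_add₀ hϖ0, zpow_one]
          ring
        rw [hform] at h
        have hb : (0 : ℤ) ≤ 2 * b + 1 := hval_of _ _ hv0 hvinv h
        rw [hyu]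
        exact hmem_of _ _ huO (by omega)
    · obtain ⟨u, a, hu0, huO, huinv, hxu, ⟨hv0, hvO, hvinv⟩, hxx⟩ := hnorm x hx
      by_cases hy : y = 0
      · subst hy
        rw [map_zero, mul_zero, mul_zero, add_zero, hxx] at h
        have ha : (0 : ℤ) ≤ 2 * a := hval_of _ _ hv0 hvinv h
        refine ⟨?_, zero_mem O⟩
        rw [hxu]
        exact hmem_of _ _ huO (by omega)
      · obtain ⟨u', b, hu'0, hu'O, hu'inv, hyu, ⟨hw0, hwO, hwinv⟩, hyy⟩ := hnorm y hy
        have hform : σ x * x + ϖ * (σ y * y)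
            = (σ u * u) * ϖ ^ (2 * a) + (σ u' * u') * ϖ ^ (2 * b + 1) := by
          rw [hxx, hyy, zpow_add₀ hϖ0, zpow_one]
          ring
        rw [hform] at h
        have hab : (0 : ℤ) ≤ a ∧ (0 : ℤ) ≤ b := by
          rcases lt_or_gt_of_ne (show (2 * a : ℤ) ≠ 2 * b + 1 by omega) with hlt | hgt
          · have ha : ¬ (2 * a : ℤ) < 0 := fun hneg =>
              hsum_nm _ _ _ _ hv0 hvinv hvO hwO hlt hneg h
            omega
          · rw [add_comm] at h
            have hb : ¬ (2 * b + 1 : ℤ) < 0 := fun hneg =>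
              hsum_nm _ _ _ _ hw0 hwinv hwO hvO hgt hneg h
            omega
        constructor
        · rw [hxu]; exact hmem_of _ _ huO (by omega)
        · rw [hyu]; exact hmem_of _ _ hu'O (by omega)
  -- Step 1: L ⊆ O²
  have hLO : ∀ v ∈ L, v 0 ∈ O ∧ v 1 ∈ O := by
    intro v hv
    have h := hsub hv v hv
    rw [hf] at h
    exact hinteg _ _ h
  -- closure properties of L
  have hLadd : ∀ v ∈ L, ∀ w ∈ L, v + w ∈ L := by
    intro v hv w hw
    rw [hLdef] at hv hw ⊢
    obtain ⟨c, d, hc, hd, rfl⟩ := hv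
    obtain ⟨c', d', hc', hd', rfl⟩ := hw
    refine ⟨c + c', d + d', add_mem hc hc', add_mem hd hd', ?_⟩
    funext i
    simp only [Pi.add_apply, Pi.smul_apply, smul_eq_mul]
    ring
  have hLsmul : ∀ (c : F), c ∈ O → ∀ v ∈ L, c • v ∈ L := by
    intro c hc v hv
    rw [hLdef] at hv ⊢
    obtain ⟨c', d', hc', hd', rfl⟩ := hv
    refine ⟨c * c', c * d', mul_mem hc hc', mul_mem hc hd', ?_⟩
    funext i
    simp only [Pi.add_apply, Pi.smul_apply, smul_eq_mul]
    ring
  -- standard basis vectors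
  set e0 : Fin 2 → F := fun i => if i = 0 then 1 else 0 with he0
  set e1 : Fin 2 → F := fun i => if i = 0 then 0 else 1 with he1
  have he00 : e0 0 = 1 := by simp [he0]
  have he01 : e0 1 = 0 := by simp [he0]
  have he10 : e1 0 = 0 := by simp [he1]
  have he11 : e1 1 = 1 := by simp [he1]
  have hσϖinv : σ ϖ⁻¹ = ϖ⁻¹ := by rw [map_inv₀, hϖσ]
  -- e1 ∈ L
  have he1L : e1 ∈ L := by
    have hmem : (ϖ⁻¹ • e1) ∈ {v : Fin 2 → F | ∀ w ∈ L, f v w ∈ O} := by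
      intro w hw
      rw [hf]
      have h0 : (ϖ⁻¹ • e1) 0 = 0 := by
        simp [he10]
      have h1 : (ϖ⁻¹ • e1) 1 = ϖ⁻¹ := by
        simp [he11]
      rw [h0, h1, map_zero, zero_mul, zero_add, hσϖinv, ← mul_assoc,
        mul_inv_cancel₀ hϖ0, one_mul]
      exact (hLO w hw).2
    have h := hsup _ hmem
    rwa [smul_smul, mul_inv_cancel₀ hϖ0, one_smul] at h
  -- e0 ∈ L
  have he0L : e0 ∈ L := by
    by_cases hP : ∀ v ∈ L, ∃ t ∈ O, v 0 = ϖ * t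
    · -- then ϖ⁻¹ e0 ∈ L^#, so e0 ∈ L, but then e0 0 = 1 is divisible by ϖ: contra
      have hmem : (ϖ⁻¹ • e0) ∈ {v : Fin 2 → F | ∀ w ∈ L, f v w ∈ O} := by
        intro w hw
        rw [hf]
        have h0 : (ϖ⁻¹ • e0) 0 = ϖ⁻¹ := by
          simp [he00]
        have h1 : (ϖ⁻¹ • e0) 1 = 0 := by
          simp [he01]
        obtain ⟨t, ht, hwt⟩ := hP w hw
        rw [h0, h1, map_zero, zero_mul, mul_zero, add_zero, hσϖinv, hwt,
          ← mul_assoc, inv_mul_cancel₀ hϖ0, one_mul]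
        exact ht
      have h := hsup _ hmem
      rw [smul_smul, mul_inv_cancel₀ hϖ0, one_smul] at h
      obtain ⟨t, ht, het⟩ := hP e0 h
      rw [he00] at het
      exact absurd het.symm (hϖnu t ht)
    · push_neg at hP
      obtain ⟨v, hvL, hv0⟩ := hP
      have hv00 : v 0 ≠ 0 := by
        intro h
        exact hv0 0 (zero_mem O) (by rw [h, mul_zero])
      have hv0O : v 0 ∈ O := (hLO v hvL).1
      have hv0inv : (v 0)⁻¹ ∈ O := by
        rcases hB _ hv0O hv00 with h | ⟨t, ht, heq⟩
        · exact h
        · exact absurd heq (hv0 t ht)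
      set w : Fin 2 → F := (v 0)⁻¹ • v with hw
      have hwL : w ∈ L := hLsmul _ hv0inv v hvL
      have hw0 : w 0 = 1 := by
        simp only [hw, Pi.smul_apply, smul_eq_mul]
        exact inv_mul_cancel₀ hv00
      have hw1O : w 1 ∈ O := (hLO w hwL).2
      have heq : e0 = w + (-(w 1)) • e1 := by
        funext i
        fin_cases i
        · simp [he00, he10, hw0]
        · simp [he01, he11]
      rw [heq]
      exact hLadd w hwL _ (hLsmul _ (neg_mem hw1O) e1 he1L)
  -- conclusion
  ext x
  constructor
  · intro hx
    exact hLO x hx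
  · rintro ⟨hx0, hx1⟩
    have hx : x = x 0 • e0 + x 1 • e1 := by
      funext i
      fin_cases i
      · simp [he00, he10]
      · simp [he01, he11]
    rw [hx]
    exact hLadd _ (hLsmul _ hx0 e0 he0L) _ (hLsmul _ hx1 e1 he1L)
end

section
/- Let $G$ be a group, $J$ a subgroup, and $x \in G$ an element with $x^2$ central in $G$ such that conjugation by $x$ preserves $J$. Suppose $J$ is a pro-$p$ group for an odd prime $p$ (or more simply: a finite $p$-group for odd $p$), and let $G^x$ denote the fixed points of conjugation by $x$ in $G$. Then for every $g \in G^x$, $JgJ \cap G^x = (J \cap G^x)\, g\, (J \cap G^x)$. -/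
/-- Stevens' Lemma 2.1: Let `G` be a group, `J` a subgroup which is a
finite `p`-group for an odd prime `p`, and `x ∈ G` with `x²` central such that
conjugation by `x` preserves `J`.  Writing `G^x` for the fixed points of conjugation
by `x`, for every `g ∈ G^x` one has `JgJ ∩ G^x = (J ∩ G^x) g (J ∩ G^x)`. -/
theorem stmt_10
    (G : Type) [Group G] (J : Subgroup G) (p : ℕ) [Fact p.Prime] (hp : p ≠ 2)
    [Finite J] (hJp : IsPGroup p J)
    (x : G) (hx2 : ∀ g : G, x ^ 2 * g = g * x ^ 2)
    (hJx : ∀ j ∈ J, x * j * x⁻¹ ∈ J)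
    (g : G) (hg : x * g * x⁻¹ = g) :
    {h : G | ∃ j ∈ J, ∃ j' ∈ J, h = j * g * j'} ∩ {h : G | x * h * x⁻¹ = h} =
      {h : G | ∃ j ∈ J, (x * j * x⁻¹ = j ∧ ∃ j' ∈ J, x * j' * x⁻¹ = j' ∧ h = j * g * j')} := by
  -- τ(u) = x u x⁻¹ is an automorphism with τ² = id
  have ht : ∀ u : G, x * (x * u * x⁻¹) * x⁻¹ = u := by
    intro u
    have h1 : x * (x * u * x⁻¹) * x⁻¹ = x ^ 2 * u * (x ^ 2)⁻¹ := by rw [pow_two]; group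
    rw [h1, hx2 u, mul_inv_cancel_right]
  ext h
  simp only [Set.mem_inter_iff, Set.mem_setOf_eq]
  constructor
  · rintro ⟨⟨j, hj, j', hj', rfl⟩, hh⟩
    -- key equation: τ(j) g τ(j') = j g j'
    have hg' : x⁻¹ * g * x = g := by
      conv_lhs => rw [← hg]
      group
    have key : (x * j * x⁻¹) * g * (x * j' * x⁻¹) = j * g * j' := by
      calc (x * j * x⁻¹) * g * (x * j' * x⁻¹)
          = x * (j * (x⁻¹ * g * x) * j') * x⁻¹ := by group
        _ = x * (j * g * j') * x⁻¹ := by rw [hg']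
        _ = j * g * j' := hh
    set a : G := (x * j * x⁻¹)⁻¹ * j with ha_def
    set b : G := (x * j' * x⁻¹) * j'⁻¹ with hb_def
    have ha_J : a ∈ J := mul_mem (inv_mem (hJx j hj)) hj
    have hb_J : b ∈ J := mul_mem (hJx j' hj') (inv_mem hj')
    -- τ(a) = a⁻¹, τ(b) = b⁻¹
    have hτa : x * a * x⁻¹ = a⁻¹ := by
      rw [ha_def]
      calc x * ((x * j * x⁻¹)⁻¹ * j) * x⁻¹
          = (x * (x * j * x⁻¹) * x⁻¹)⁻¹ * (x * j * x⁻¹) := by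
            simp only [mul_inv_rev, inv_inv, mul_assoc, inv_mul_cancel_left, mul_inv_cancel_left]
        _ = j⁻¹ * (x * j * x⁻¹) := by rw [ht j]
        _ = ((x * j * x⁻¹)⁻¹ * j)⁻¹ := by group
    have hτb : x * b * x⁻¹ = b⁻¹ := by
      rw [hb_def]
      calc x * ((x * j' * x⁻¹) * j'⁻¹) * x⁻¹
          = (x * (x * j' * x⁻¹) * x⁻¹) * (x * j' * x⁻¹)⁻¹ := by
            simp only [mul_inv_rev, inv_inv, mul_assoc, inv_mul_cancel_left, mul_inv_cancel_left]
        _ = j' * (x * j' * x⁻¹)⁻¹ := by rw [ht j']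
        _ = ((x * j' * x⁻¹) * j'⁻¹)⁻¹ := by group
    -- a = g b g⁻¹
    have hab : a = g * b * g⁻¹ := by
      rw [ha_def, hb_def]
      calc (x * j * x⁻¹)⁻¹ * j
          = (x * j * x⁻¹)⁻¹ * (j * g * j') * (g * j')⁻¹ := by group
        _ = (x * j * x⁻¹)⁻¹ * ((x * j * x⁻¹) * g * (x * j' * x⁻¹)) * (g * j')⁻¹ := by
            rw [key]
        _ = g * ((x * j' * x⁻¹) * j'⁻¹) * g⁻¹ := by group
    -- b has odd order dividing a power of p
    obtain ⟨k, hk⟩ := hJp ⟨b, hb_J⟩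
    set n : ℕ := p ^ k with hn_def
    have hbn : b ^ n = 1 := by
      have := congrArg (Subtype.val) hk
      simpa using this
    have han : a ^ n = 1 := by
      rw [hab, conj_pow, hbn, mul_one, mul_inv_cancel]
    have hodd : Odd n := Odd.pow ((Fact.out : p.Prime).odd_of_ne_two hp)
    set m : ℕ := (n + 1) / 2 with hm_def
    have h2m : 2 * m = n + 1 := by
      rw [hm_def, mul_comm]
      exact Nat.div_mul_cancel hodd.add_one.two_dvd
    have ha2m : a ^ (2 * m) = a := by rw [h2m, pow_succ, han, one_mul]
    have hb2m : b ^ (2 * m) = b := by rw [h2m, pow_succ, hbn, one_mul]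
    -- the fixed witnesses
    have hτj : x * j * x⁻¹ = j * a⁻¹ := by rw [ha_def]; group
    have hτj' : x * j' * x⁻¹ = b * j' := by rw [hb_def]; group
    have hstep_a : a⁻¹ * a ^ m = (a ^ m)⁻¹ := by
      apply mul_left_cancel (a := a ^ m)
      calc a ^ m * (a⁻¹ * a ^ m) = a ^ (2 * m) * a⁻¹ := by rw [two_mul, pow_add]; group
        _ = a * a⁻¹ := by rw [ha2m]
        _ = a ^ m * (a ^ m)⁻¹ := by group
    have hstep_b : (b⁻¹) ^ m * b = b ^ m := by
      apply mul_left_cancel (a := b ^ m)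
      calc b ^ m * ((b⁻¹) ^ m * b) = b := by rw [inv_pow]; group
        _ = b ^ (2 * m) := hb2m.symm
        _ = b ^ m * b ^ m := by rw [two_mul, pow_add]
    have hconj_pow_a : x * a ^ m * x⁻¹ = (a⁻¹) ^ m := by
      calc x * a ^ m * x⁻¹ = (x * a * x⁻¹) ^ m := by rw [conj_pow]
        _ = (a⁻¹) ^ m := by rw [hτa]
    have hconj_pow_b : x * b ^ m * x⁻¹ = (b⁻¹) ^ m := by
      calc x * b ^ m * x⁻¹ = (x * b * x⁻¹) ^ m := by rw [conj_pow]
        _ = (b⁻¹) ^ m := by rw [hτb]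
    refine ⟨j * (a ^ m)⁻¹, mul_mem hj (inv_mem (pow_mem ha_J m)), ?_,
      b ^ m * j', mul_mem (pow_mem hb_J m) hj', ?_, ?_⟩
    · -- x * (j * (a^m)⁻¹) * x⁻¹ = j * (a^m)⁻¹
      calc x * (j * (a ^ m)⁻¹) * x⁻¹
          = (x * j * x⁻¹) * (x * a ^ m * x⁻¹)⁻¹ := by group
        _ = (j * a⁻¹) * ((a⁻¹) ^ m)⁻¹ := by rw [hτj, hconj_pow_a]
        _ = j * (a⁻¹ * a ^ m) := by rw [inv_pow, inv_inv]; group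
        _ = j * (a ^ m)⁻¹ := by rw [hstep_a]
    · -- x * (b^m * j') * x⁻¹ = b^m * j'
      calc x * (b ^ m * j') * x⁻¹
          = (x * b ^ m * x⁻¹) * (x * j' * x⁻¹) := by group
        _ = (b⁻¹) ^ m * (b * j') := by rw [hconj_pow_b, hτj']
        _ = ((b⁻¹) ^ m * b) * j' := by group
        _ = b ^ m * j' := by rw [hstep_b]
    · -- j * g * j' = (j * (a^m)⁻¹) * g * (b^m * j')
      have hpow : a ^ m = g * b ^ m * g⁻¹ := by rw [hab, conj_pow]
      calc j * g * j'
          = j * (g * b ^ m * g⁻¹)⁻¹ * (g * b ^ m * g⁻¹) * g * j' := by group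
        _ = j * (a ^ m)⁻¹ * (g * b ^ m * g⁻¹) * g * j' := by rw [← hpow]
        _ = (j * (a ^ m)⁻¹) * g * (b ^ m * j') := by group
  · rintro ⟨j, hj, hjfix, j', hj', hj'fix, rfl⟩
    refine ⟨⟨j, hj, j', hj', rfl⟩, ?_⟩
    calc x * (j * g * j') * x⁻¹
        = (x * j * x⁻¹) * (x * g * x⁻¹) * (x * j' * x⁻¹) := by group
      _ = j * g * j' := by rw [hjfix, hg, hj'fix]
end

section
/- Let $F/F_0$ be an unramified quadratic extension of non-archimedean local fields and $(V, f)$ a 2-dimensional nondegenerate hermitian space. Let $\Lambda$ be a strict self-dual $\mathfrak{o}_F$-lattice sequence in $V$ with $e(\Lambda) = 2$ and duality index $d(\Lambda)$ (so $\Lambda(i)^\# = \Lambda(d(\Lambda)-i)$). Then $(V, f)$ is anisotropic if and only if $d(\Lambda)$ is odd. -/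
open IsLocalRing Polynomial

section Solver
variable (R : Type) [CommRing R] [IsDomain R] [IsDiscreteValuationRing R]
    [HenselianLocalRing R] [Finite (IsLocalRing.ResidueField R)]

set_option maxHeartbeats 1000000 in
set_option synthInstance.maxHeartbeats 200000 in
theorem solver_aux (hodd : ringChar (IsLocalRing.ResidueField R) ≠ 2)
    (τ : R →+* R) (hτ2 : ∀ x, τ (τ x) = x)
    (ϖ : R) (hϖ : Irreducible ϖ) (hτϖ : τ ϖ = ϖ)
    (uw : R) (huw : IsUnit uw) (hτuw : τ uw = -uw)
    (u₀ : R) (hu₀ : IsUnit u₀) (hτu₀ : τ u₀ = u₀) :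
    ∃ t : R, t * τ t = u₀ := by
  classical
  set k := IsLocalRing.ResidueField R with hk
  set res : R →+* k := IsLocalRing.residue R with hres
  -- residue characteristic facts
  have h2k : (2 : k) ≠ 0 := by
    intro h
    have hdvd : ringChar k ∣ 2 := ringChar.dvd (by exact_mod_cast h)
    rcases CharP.char_is_prime_or_zero k (ringChar k) with hp | h0
    · exact hodd ((Nat.prime_dvd_prime_iff_eq hp Nat.prime_two).mp hdvd)
    · rw [h0] at hdvd; norm_num at hdvd
  have hres_zero : ∀ x : R, res x = 0 ↔ x ∈ maximalIdeal R := fun x =>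
    Ideal.Quotient.eq_zero_iff_mem
  have hunit_res : ∀ x : R, IsUnit x ↔ res x ≠ 0 := by
    intro x
    constructor
    · intro hx h0
      have : x ∈ maximalIdeal R := (hres_zero x).mp h0
      exact ((mem_maximalIdeal x).mp this) hx
    · intro h0
      by_contra h
      exact h0 ((hres_zero x).mpr ((mem_maximalIdeal x).mpr h))
  have h2R : IsUnit (2 : R) := by
    rw [hunit_res]
    intro h; apply h2k
    have h22 : res (2 : R) = (2 : k) := map_ofNat res 2
    rw [← h22, h]
  have hmax : maximalIdeal R = Ideal.span {ϖ} :=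
    (IsDiscreteValuationRing.irreducible_iff_uniformizer ϖ).mp hϖ
  have hτm : ∀ x ∈ maximalIdeal R, τ x ∈ maximalIdeal R := by
    intro x hx
    rw [hmax, Ideal.mem_span_singleton] at hx ⊢
    obtain ⟨cc, rfl⟩ := hx
    exact ⟨τ cc, by rw [map_mul, hτϖ]⟩
  -- Hensel square roots of fixed units
  have hsqrt : ∀ u z : R, IsUnit u → τ u = u → τ z = z →
      z * z - u ∈ maximalIdeal R → ∃ s : R, τ s = s ∧ s * s = u := by
    intro u z hu hτu hτz hzm
    have hzu : IsUnit z := by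
      by_contra h
      have hz' : z ∈ maximalIdeal R := (mem_maximalIdeal z).mpr h
      have : u ∈ maximalIdeal R := by
        have := (maximalIdeal R).sub_mem (Ideal.mul_mem_left _ z hz') hzm
        simpa using this
      exact ((mem_maximalIdeal u).mp this) hu
    set p : R[X] := X ^ 2 - C u with hp
    have hmonic : p.Monic := monic_X_pow_sub_C u two_ne_zero
    have heval : p.eval z ∈ maximalIdeal R := by
      have : p.eval z = z * z - u := by simp [hp, sq]
      rwa [this]
    have hder : IsUnit (p.derivative.eval z) := by
      have hder' : p.derivative = C 2 * X := by
        simp [hp, derivative_X_pow, C_ofNat, one_add_one_eq_two]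
      rw [hder']
      simpa using h2R.mul hzu
    obtain ⟨s, hroot, hsz⟩ := HenselianLocalRing.is_henselian p hmonic z heval hder
    have hs2 : s * s = u := by
      have : p.eval s = 0 := hroot
      have h0 : s * s - u = 0 := by simpa [hp, sq] using this
      have := sub_eq_zero.mp h0
      exact this
    have hτs2 : τ s * τ s = u := by rw [← map_mul, hs2, hτu]
    have hfac : (τ s - s) * (τ s + s) = 0 := by
      have : (τ s - s) * (τ s + s) = τ s * τ s - s * s := by ring
      rw [this, hτs2, hs2, sub_self]
    rcases mul_eq_zero.mp hfac with hcase | hcase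
    · exact ⟨s, sub_eq_zero.mp hcase, hs2⟩
    · exfalso
      have hτss : τ s = -s := by linear_combination hcase
      have h1 : s - z ∈ maximalIdeal R := hsz
      have h2 : τ (s - z) ∈ maximalIdeal R := hτm _ h1
      rw [map_sub, hτss, hτz] at h2
      have h3 : (2 : R) * z ∈ maximalIdeal R := by
        have := (maximalIdeal R).neg_mem ((maximalIdeal R).add_mem h2 h1)
        have heq : -(-s - z + (s - z)) = 2 * z := by ring
        rwa [heq] at this
      exact ((mem_maximalIdeal _).mp h3) (h2R.mul hzu)
  -- the fixed subfield of the residue field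
  set R₀ : Subring R := RingHom.eqLocus τ (RingHom.id R) with hR₀
  set K₀ : Subring k := Subring.map res R₀ with hK₀
  haveI : Finite ↥K₀ := Subtype.finite
  letI : Fintype ↥K₀ := Fintype.ofFinite _
  letI fieldK : Field ↥K₀ := (Finite.isField_of_domain ↥K₀).toField
  haveI hcharK : CharP ↥K₀ (ringChar k) := by
    constructor
    intro n
    have h1 : ((n : ↥K₀) : k) = (n : k) := map_natCast K₀.subtype n
    rw [← CharP.cast_eq_zero_iff k (ringChar k) n, ← h1]
    constructor
    · intro h; rw [h]; exact map_zero K₀.subtype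
    · intro h; exact Subtype.ext h
  have hcard : Fintype.card ↥K₀ % 2 = 1 := by
    obtain ⟨n, hp, hcardeq⟩ := FiniteField.card ↥K₀ (ringChar k)
    rw [hcardeq]
    exact Nat.odd_iff.mp (Odd.pow (hp.odd_of_ne_two hodd))
  -- the norm form data
  set c : R := uw * uw with hc
  have hτc : τ c = c := by rw [hc, map_mul, hτuw]; ring
  have hcu : IsUnit c := huw.mul huw
  have hu₀mem : res u₀ ∈ K₀ := ⟨u₀, hτu₀, rfl⟩
  have hcmem : res c ∈ K₀ := ⟨c, hτc, rfl⟩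
  set A₀ : ↥K₀ := ⟨res u₀, hu₀mem⟩ with hA₀
  set C₀ : ↥K₀ := ⟨res c, hcmem⟩ with hC₀
  have hC₀ne : C₀ ≠ 0 := by
    intro h
    have : res c = 0 := congrArg Subtype.val h
    exact ((hunit_res c).mp hcu) this
  -- solve the quadratic over the finite field K₀
  have hdeg1 : (X ^ 2 - C A₀ : Polynomial ↥K₀).degree = 2 :=
    degree_X_pow_sub_C (by norm_num) A₀
  have hdeg2 : (C (-C₀) * X ^ 2 : Polynomial ↥K₀).degree = 2 := by
    exact_mod_cast degree_C_mul_X_pow 2 (neg_ne_zero.mpr hC₀ne)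
  obtain ⟨a, b, hab⟩ := FiniteField.exists_root_sum_quadratic hdeg1 hdeg2 hcard
  have hab' : a ^ 2 - A₀ + -C₀ * b ^ 2 = 0 := by
    simpa using hab
  -- lift a and b to τ-fixed elements of R
  obtain ⟨x₀, hx₀τ, hx₀⟩ := a.2
  obtain ⟨y₀, hy₀τ, hy₀⟩ := b.2
  have hx₀τ' : τ x₀ = x₀ := hx₀τ
  have hy₀τ' : τ y₀ = y₀ := hy₀τ
  -- the relation in k
  have hrel : (res x₀) * (res x₀) - res u₀ - res c * ((res y₀) * (res y₀)) = 0 := by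
    rw [pow_two, pow_two] at hab'
    have h : ((a : k)) * (a : k) - (res u₀) + -(res c) * ((b : k) * (b : k)) = 0 :=
      congrArg Subtype.val hab'
    rw [← hx₀, ← hy₀] at h
    linear_combination h
  by_cases hA : res x₀ = 0
  · -- res u₀ = - res c * (res y₀)^2 ; use t = uw * y
    have hc'ex : ∃ c' : R, c * c' = 1 := ⟨↑hcu.unit⁻¹, hcu.unit.mul_inv⟩
    obtain ⟨c', hcc'⟩ := hc'ex
    have hcne : c ≠ 0 := hcu.ne_zero
    have hτc' : τ c' = c' := by
      have h1 : c * τ c' = 1 := by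
        have := congrArg τ hcc'
        rwa [map_mul, map_one, hτc] at this
      have h2 : c * τ c' = c * c' := by rw [h1, hcc']
      exact mul_left_cancel₀ hcne h2
    have hc'u : IsUnit c' := IsUnit.of_mul_eq_one (a := c') c (by rw [mul_comm]; exact hcc')
    set u₁ : R := -(u₀ * c') with hu₁
    have hu₁u : IsUnit u₁ := (hu₀.mul hc'u).neg
    have hτu₁ : τ u₁ = u₁ := by rw [hu₁, map_neg, map_mul, hτu₀, hτc']
    have hy₀m : y₀ * y₀ - u₁ ∈ maximalIdeal R := by
      rw [← hres_zero]
      have hz : res (y₀ * y₀ - u₁) =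
          res y₀ * res y₀ + res u₀ * res c' := by
        rw [map_sub, map_mul]
        rw [hu₁]
        rw [map_neg, map_mul]
        ring
      rw [hz]
      have hcc'k : res c * res c' = 1 := by rw [← map_mul, hcc', map_one]
      rw [hA] at hrel
      have hu₀k : res u₀ = -(res c * (res y₀ * res y₀)) := by linear_combination -hrel
      rw [hu₀k]
      linear_combination (-(res y₀ * res y₀)) * hcc'k
    obtain ⟨y, hτy, hy2⟩ := hsqrt u₁ y₀ hu₁u hτu₁ hy₀τ' hy₀m
    refine ⟨uw * y, ?_⟩
    rw [map_mul, hτuw, hτy]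
    have : uw * y * (-uw * y) = -(c * (y * y)) := by rw [hc]; ring
    rw [this, hy2, hu₁]
    have : -(c * -(u₀ * c')) = u₀ * (c * c') := by ring
    rw [this, hcc', mul_one]
  · -- res x₀ ≠ 0 ; use t = s + uw * y₀
    set u₁ : R := u₀ + c * (y₀ * y₀) with hu₁
    have hτu₁ : τ u₁ = u₁ := by
      rw [hu₁, map_add, map_mul, hτu₀, hτc, map_mul, hy₀τ']
    have hresu₁ : res u₁ = res x₀ * res x₀ := by
      rw [hu₁, map_add, map_mul, show res (y₀ * y₀) = res y₀ * res y₀ from map_mul res y₀ y₀]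
      linear_combination -hrel
    have hu₁u : IsUnit u₁ := by
      rw [hunit_res, hresu₁]
      exact mul_ne_zero hA hA
    have hx₀m : x₀ * x₀ - u₁ ∈ maximalIdeal R := by
      rw [← hres_zero, map_sub, map_mul, hresu₁, sub_self]
    obtain ⟨s, hτs, hs2⟩ := hsqrt u₁ x₀ hu₁u hτu₁ hx₀τ' hx₀m
    refine ⟨s + uw * y₀, ?_⟩
    rw [map_add, map_mul, hτs, hτuw, hy₀τ']
    have : (s + uw * y₀) * (s + -uw * y₀) = s * s - c * (y₀ * y₀) := by rw [hc]; ring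
    rw [this, hs2, hu₁]
    ring


end Solver

section Lattice
variable (R : Type) [CommRing R] [IsDomain R] [IsDiscreteValuationRing R]
    (F : Type) [Field F] [Algebra R F] [IsFractionRing R F]
    (V : Type) [AddCommGroup V] [Module F V] [Module R V] [IsScalarTower R F V]

theorem lattice_basis_aux (hdim : Module.finrank F V = 2) (L : Submodule R V)
    (hfg : L.FG) (hsp : Submodule.span F ((L : Set V)) = ⊤) :
    ∃ b1 b2 : V, b1 ∈ L ∧ b2 ∈ L ∧
      (∀ x ∈ L, ∃ r s : R, x = r • b1 + s • b2) ∧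
      (∀ x y : F, x • b1 + y • b2 = 0 → x = 0 ∧ y = 0) := by
  classical
  have hinj : Function.Injective (algebraMap R F) := IsFractionRing.injective R F
  haveI : FiniteDimensional F V := Module.finite_of_finrank_eq_succ (n := 1) hdim
  haveI : NoZeroSMulDivisors R V := by
    constructor
    intro r x h
    by_cases hr : r = 0
    · exact Or.inl hr
    · right
      have h1 : algebraMap R F r • x = 0 := by rwa [algebraMap_smul]
      have h2 : algebraMap R F r ≠ 0 := by
        simpa using (map_eq_zero_iff _ hinj).not.mpr hr
      exact (smul_eq_zero.mp h1).resolve_left h2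
  haveI : NoZeroSMulDivisors R ↥L := by
    constructor
    intro r x h
    have h' : r • (x : V) = 0 := by exact_mod_cast congrArg Subtype.val h
    rcases smul_eq_zero.mp h' with hr | hx
    · exact Or.inl hr
    · exact Or.inr (Subtype.ext hx)
  haveI : Module.Finite R ↥L := Module.Finite.iff_fg.mpr hfg
  obtain ⟨n, b⟩ := Module.basisOfFiniteTypeTorsionFree' (R := R) (M := ↥L)
  set vB : Fin n → V := fun j => ((b j : ↥L) : V) with hvB
  have hLIR : LinearIndependent R vB := by
    have := b.linearIndependent.map' L.subtype L.ker_subtype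
    exact this
  have hLIF : LinearIndependent F vB := hLIR.localization F (nonZeroDivisors R)
  have hspanR : Submodule.span R (Set.range vB) = L := by
    have h1 := congrArg (Submodule.map L.subtype) b.span_eq
    rw [Submodule.map_span, Submodule.map_subtype_top, ← Set.range_comp] at h1
    exact h1
  have hsubF : ∀ x ∈ L, x ∈ Submodule.span F (Set.range vB) := by
    intro x hx
    have hx' : x ∈ Submodule.span R (Set.range vB) := hspanR.symm ▸ hx
    refine Submodule.span_induction ?_ ?_ ?_ ?_ hx'
    · exact fun y hy => Submodule.subset_span hy
    · exact Submodule.zero_mem _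
    · exact fun y z _ _ hy hz => Submodule.add_mem _ hy hz
    · intro r y _ hy
      rw [← algebraMap_smul F r y]
      exact Submodule.smul_mem _ _ hy
  have hspanF : Submodule.span F (Set.range vB) = ⊤ := by
    rw [eq_top_iff, ← hsp]
    exact Submodule.span_le.mpr hsubF
  let bF : Module.Basis (Fin n) F V := Module.Basis.mk hLIF (le_of_eq hspanF.symm)
  have hn : n = 2 := by
    have h := Module.finrank_eq_card_basis bF
    rw [hdim, Fintype.card_fin] at h
    omega
  subst hn
  refine ⟨vB 0, vB 1, by simp [hvB], by simp [hvB], ?_, ?_⟩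
  · intro x hx
    have hx' : x ∈ Submodule.span R (Set.range vB) := hspanR.symm ▸ hx
    obtain ⟨cc, hcc⟩ := (Submodule.mem_span_range_iff_exists_fun R).mp hx'
    exact ⟨cc 0, cc 1, by rw [← hcc, Fin.sum_univ_two]⟩
  · intro x y hxy
    have := Fintype.linearIndependent_iff.mp hLIF ![x, y] (by
      rw [Fin.sum_univ_two]
      simpa using hxy)
    exact ⟨by simpa using this 0, by simpa using this 1⟩

end Lattice

set_option maxHeartbeats 2000000 in
/-- Let `(V, f)` be a 2-dimensional nondegenerate hermitian space over
the unramified quadratic extension `F/F₀` of non-archimedean local fields (odd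
residual characteristic), and `Λ` a strict self-dual `𝔬_F`-lattice sequence in `V`
with `e(Λ) = 2` and `Λ(i)^# = Λ(d-i)`.  Then `(V,f)` is anisotropic iff `d` is odd.
Here `𝔬_F` is modelled by a complete (Henselian) discrete valuation ring `R` with
finite residue field of odd characteristic and fraction field `F`, the Galois
conjugation `σ` fixes a uniformizer `ϖ` (unramifiedness). -/
theorem stmt_11
    (R : Type) [CommRing R] [IsDomain R] [IsDiscreteValuationRing R]
    [HenselianLocalRing R] [Finite (IsLocalRing.ResidueField R)]
    (hodd : ringChar (IsLocalRing.ResidueField R) ≠ 2)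
    (F : Type) [Field F] [Algebra R F] [IsFractionRing R F]
    (σ : F ≃+* F) (hσ2 : ∀ x, σ (σ x) = x) (hσne : σ ≠ RingEquiv.refl F)
    (hRσ : ∀ x : R, ∃ y : R, algebraMap R F y = σ (algebraMap R F x))
    (ϖ : R) (hϖ : Irreducible ϖ) (hϖσ : σ (algebraMap R F ϖ) = algebraMap R F ϖ)
    (V : Type) [AddCommGroup V] [Module F V] [Module R V] [IsScalarTower R F V]
    (hdim : Module.finrank F V = 2)
    (f : V → V → F)
    (hadd₁ : ∀ v v' w, f (v + v') w = f v w + f v' w)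
    (hadd₂ : ∀ v w w', f v (w + w') = f v w + f v w')
    (hsmul₁ : ∀ (a : F) v w, f (a • v) w = σ a * f v w)
    (hsmul₂ : ∀ (a : F) v w, f v (a • w) = a * f v w)
    (hherm : ∀ v w, f w v = σ (f v w))
    (hnd : ∀ v, (∀ w, f v w = 0) → v = 0)
    (Λ : ℤ → Submodule R V)
    (hlat : ∀ i, (Λ i).FG ∧ Submodule.span F ((Λ i : Set V)) = ⊤)
    (hstrict : ∀ i, Λ (i + 1) < Λ i)
    (hper : ∀ i, ((Λ (i + 2) : Set V)) = (fun v => algebraMap R F ϖ • v) '' (Λ i : Set V))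
    (d : ℤ)
    (hdual : ∀ i, ((Λ (d - i) : Set V)) =
      {v : V | ∀ w ∈ Λ i, ∃ r : R, f v w = algebraMap R F r}) :
    (∀ v : V, f v v = 0 → v = 0) ↔ Odd d := by
  classical
  have hinj : Function.Injective (algebraMap R F) := IsFractionRing.injective R F
  have hϖ0 : ϖ ≠ 0 := hϖ.ne_zero
  have hπ0 : algebraMap R F ϖ ≠ 0 := by
    rw [Ne, map_eq_zero_iff _ hinj]; exact hϖ0
  haveI : FiniteDimensional F V := Module.finite_of_finrank_eq_succ (n := 1) hdim
  -- the conjugation on R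
  choose σR hσR using hRσ
  let τ : R →+* R := {
    toFun := σR
    map_one' := hinj (by rw [hσR, map_one, map_one])
    map_mul' := fun x y => hinj (by rw [hσR, map_mul, map_mul, map_mul, hσR, hσR])
    map_zero' := hinj (by rw [hσR, map_zero, map_zero])
    map_add' := fun x y => hinj (by rw [hσR, map_add, map_add, map_add, hσR, hσR]) }
  have hτ : ∀ x : R, algebraMap R F (τ x) = σ (algebraMap R F x) := hσR
  have hτϖ : τ ϖ = ϖ := hinj (by rw [hτ, hϖσ])
  have hτ2 : ∀ x, τ (τ x) = x := fun x => hinj (by rw [hτ, hτ, hσ2])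
  have hτunit : ∀ u : R, IsUnit u → IsUnit (τ u) := by
    intro u hu
    obtain ⟨u', hu'⟩ : ∃ u', u * u' = 1 := ⟨↑hu.unit⁻¹, hu.unit.mul_inv⟩
    exact IsUnit.of_mul_eq_one (τ u') (by rw [← map_mul, hu', map_one])
  -- the skew unit
  have hwex : ∃ uw : R, IsUnit uw ∧ τ uw = -uw := by
    have hx0 : ∃ x0 : R, τ x0 ≠ x0 := by
      by_contra hcon
      push_neg at hcon
      apply hσne
      apply RingEquiv.ext
      intro z
      obtain ⟨xx, yy, hyy, hz⟩ := IsFractionRing.div_surjective (A := R) z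
      have hfix : ∀ x : R, σ (algebraMap R F x) = algebraMap R F x := by
        intro x; rw [← hτ, hcon]
      rw [← hz, map_div₀, hfix, hfix, RingEquiv.refl_apply]
    obtain ⟨x0, hx0⟩ := hx0
    have hδ : x0 - τ x0 ≠ 0 := by
      intro h; exact hx0 (by linear_combination -h)
    obtain ⟨n, u, hu⟩ := IsDiscreteValuationRing.eq_unit_mul_pow_irreducible hδ hϖ
    refine ⟨(u : R), u.isUnit, ?_⟩
    have h1 : τ (x0 - τ x0) = -(x0 - τ x0) := by
      rw [map_sub, hτ2]; ring
    rw [hu, map_mul, map_pow, hτϖ] at h1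
    have h2 : τ (u : R) * ϖ ^ n = -(u : R) * ϖ ^ n := by linear_combination h1
    have hϖn : (ϖ : R) ^ n ≠ 0 := pow_ne_zero _ hϖ0
    exact mul_right_cancel₀ hϖn h2
  obtain ⟨uw, huwu, hτuw⟩ := hwex
  -- 2 is a unit in R
  have hmaxI : IsLocalRing.maximalIdeal R = Ideal.span {ϖ} :=
    (IsDiscreteValuationRing.irreducible_iff_uniformizer ϖ).mp hϖ
  have hnonunit_dvd : ∀ r : R, ¬IsUnit r → ϖ ∣ r := by
    intro r hr
    rw [← Ideal.mem_span_singleton, ← hmaxI]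
    exact (IsLocalRing.mem_maximalIdeal r).mpr hr
  have h2R : IsUnit (2 : R) := by
    by_contra h2
    have h2m : (2 : R) ∈ IsLocalRing.maximalIdeal R := (IsLocalRing.mem_maximalIdeal _).mpr h2
    have h2k : (2 : IsLocalRing.ResidueField R) = 0 := by
      have : IsLocalRing.residue R (2 : R) = 0 := Ideal.Quotient.eq_zero_iff_mem.mpr h2m
      rwa [map_ofNat] at this
    have hdvd : ringChar (IsLocalRing.ResidueField R) ∣ 2 := ringChar.dvd (by exact_mod_cast h2k)
    rcases CharP.char_is_prime_or_zero (IsLocalRing.ResidueField R)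
        (ringChar (IsLocalRing.ResidueField R)) with hp | h0
    · exact hodd ((Nat.prime_dvd_prime_iff_eq hp Nat.prime_two).mp hdvd)
    · rw [h0] at hdvd; norm_num at hdvd
  have h2F : (2 : F) ≠ 0 := by
    have : algebraMap R F 2 = (2 : F) := map_ofNat _ 2
    rw [← this, Ne, map_eq_zero_iff _ hinj]
    intro h
    rw [h] at h2R
    exact not_isUnit_zero h2R
  have hnonadd : ∀ x y : R, ¬IsUnit x → ¬IsUnit y → ¬IsUnit (x + y) := by
    intro x y hx hy
    have := Ideal.add_mem _ ((IsLocalRing.mem_maximalIdeal x).mpr hx)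
      ((IsLocalRing.mem_maximalIdeal y).mpr hy)
    exact (IsLocalRing.mem_maximalIdeal _).mp this
  -- scalar conversion
  have hsm : ∀ (r : R) (v : V), r • v = algebraMap R F r • v :=
    fun r v => (algebraMap_smul F r v).symm
  -- basic f lemmas
  have hf0l : ∀ w, f 0 w = 0 := by
    intro w
    have h := hadd₁ 0 0 w
    rw [add_zero] at h
    linear_combination -h
  have hf0r : ∀ v, f v 0 = 0 := by
    intro v
    have h := hadd₂ v 0 0
    rw [add_zero] at h
    linear_combination -h
  have hneg₂ : ∀ v w, f v (-w) = -f v w := by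
    intro v w
    have h := hadd₂ v w (-w)
    rw [add_neg_cancel, hf0r] at h
    linear_combination -h
  have hsub₂ : ∀ v w w', f v (w - w') = f v w - f v w' := by
    intro v w w'
    rw [sub_eq_add_neg, hadd₂, hneg₂]; ring
  have hneg₁ : ∀ v w, f (-v) w = -f v w := by
    intro v w
    have h := hadd₁ v (-v) w
    rw [add_neg_cancel, hf0l] at h
    linear_combination -h
  have hsub₁ : ∀ v v' w, f (v - v') w = f v w - f v' w := by
    intro v v' w
    rw [sub_eq_add_neg, hadd₁, hneg₁]; ring
  -- expansion lemma
  have hexp : ∀ (a b c e : F) (u1 u2 : V),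
      f (a • u1 + b • u2) (c • u1 + e • u2) =
        σ a * c * f u1 u1 + σ a * e * f u1 u2 + σ b * c * f u2 u1 + σ b * e * f u2 u2 := by
    intro a b c e u1 u2
    simp only [hadd₁, hadd₂, hsmul₁, hsmul₂]
    ring
  -- determinant transformation
  have hdt : ∀ (u1 u2 : V) (a b c e : F),
      f (a • u1 + b • u2) (a • u1 + b • u2) * f (c • u1 + e • u2) (c • u1 + e • u2) -
        f (a • u1 + b • u2) (c • u1 + e • u2) * f (c • u1 + e • u2) (a • u1 + b • u2) =
      σ (a * e - b * c) * (a * e - b * c) *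
        (f u1 u1 * f u2 u2 - f u1 u2 * f u2 u1) := by
    intro u1 u2 a b c e
    rw [hexp, hexp, hexp, hexp, map_sub, map_mul, map_mul]
    ring
  -- spanning from pair independence
  have hpair : ∀ p q : V, (∀ x y : F, x • p + y • q = 0 → x = 0 ∧ y = 0) →
      ∀ z : V, ∃ x y : F, z = x • p + y • q := by
    intro p q hpq z
    have hli : LinearIndependent F ![p, q] := LinearIndependent.pair_iff.mpr hpq
    have hsp : Submodule.span F (Set.range ![p, q]) = ⊤ := by
      apply Submodule.eq_top_of_finrank_eq
      rw [finrank_span_eq_card hli, hdim]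
      simp
    have hz : z ∈ Submodule.span F (Set.range ![p, q]) := by rw [hsp]; trivial
    have hrange : Set.range ![p, q] = {p, q} := by
      simp [Matrix.range_cons, Matrix.range_empty]
      exact Set.pair_comm q p
    rw [hrange] at hz
    obtain ⟨x, y, hxy⟩ := Submodule.mem_span_pair.mp hz
    exact ⟨x, y, hxy.symm⟩
  -- nondegenerate Gram determinant
  have hgram : ∀ p q : V, (∀ x y : F, x • p + y • q = 0 → x = 0 ∧ y = 0) →
      f p p * f q q - f p q * f q p ≠ 0 := by
    intro p q hpq hdet
    -- find a nonzero vector orthogonal to p and q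
    have hz : ∃ d1 d2 : F, ¬(d1 = 0 ∧ d2 = 0) ∧
        d1 * f p p + d2 * f q p = 0 ∧ d1 * f p q + d2 * f q q = 0 := by
      by_cases h1 : f q p = 0 ∧ f p p = 0
      · by_cases h2 : f q q = 0 ∧ f p q = 0
        · exact ⟨1, 0, by simp, by rw [h1.1, h1.2]; ring, by rw [h2.1, h2.2]; ring⟩
        · refine ⟨f q q, -f p q, ?_, by rw [h1.1, h1.2]; ring, by ring⟩
          intro ⟨ha, hb⟩
          exact h2 ⟨ha, neg_eq_zero.mp hb⟩
      · refine ⟨f q p, -f p p, ?_, by ring, by linear_combination -hdet⟩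
        intro ⟨ha, hb⟩
        exact h1 ⟨ha, neg_eq_zero.mp hb⟩
    obtain ⟨d1, d2, hdne, he1, he2⟩ := hz
    set z := σ d1 • p + σ d2 • q with hzdef
    have hzp : f z p = 0 := by
      rw [hzdef, hadd₁, hsmul₁, hsmul₁, hσ2, hσ2]
      exact he1
    have hzq : f z q = 0 := by
      rw [hzdef, hadd₁, hsmul₁, hsmul₁, hσ2, hσ2]
      exact he2
    have hz0 : z = 0 := by
      apply hnd
      intro y
      obtain ⟨xc, yc, hy⟩ := hpair p q hpq y
      rw [hy, hadd₂, hsmul₂, hsmul₂, hzp, hzq]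
      ring
    have := hpq (σ d1) (σ d2) (by rw [← hzdef]; exact hz0)
    apply hdne
    constructor
    · have := this.1
      have h' := congrArg σ this
      rwa [hσ2, map_zero] at h'
    · have := this.2
      have h' := congrArg σ this
      rwa [hσ2, map_zero] at h'
  -- valuation decomposition
  have hval : ∀ x : F, x ≠ 0 → ∃ (n : ℤ) (u : R), IsUnit u ∧
      x = algebraMap R F u * (algebraMap R F ϖ) ^ n := by
    intro x hx
    obtain ⟨a, bb, hbb, hq⟩ := IsFractionRing.div_surjective (A := R) x
    have hbb0 : bb ≠ 0 := nonZeroDivisors.ne_zero hbb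
    have hιbb : algebraMap R F bb ≠ 0 := by rw [Ne, map_eq_zero_iff _ hinj]; exact hbb0
    have ha0 : a ≠ 0 := by
      intro h
      rw [h, map_zero, zero_div] at hq
      exact hx hq.symm
    obtain ⟨na, ua, hua⟩ := IsDiscreteValuationRing.eq_unit_mul_pow_irreducible ha0 hϖ
    obtain ⟨nb, ub, hub⟩ := IsDiscreteValuationRing.eq_unit_mul_pow_irreducible hbb0 hϖ
    refine ⟨(na : ℤ) - (nb : ℤ), (ua * ub⁻¹ : Rˣ), (ua * ub⁻¹ : Rˣ).isUnit, ?_⟩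
    have hubinv : algebraMap R F ((ub⁻¹ : Rˣ) : R) = (algebraMap R F ((ub : Rˣ) : R))⁻¹ := by
      have h1 : algebraMap R F ((ub : Rˣ) : R) * algebraMap R F ((ub⁻¹ : Rˣ) : R) = 1 := by
        rw [← map_mul, Units.mul_inv, map_one]
      field_simp at h1 ⊢
      linear_combination h1
    have hubne : algebraMap R F ((ub : Rˣ) : R) ≠ 0 := by
      rw [Ne, map_eq_zero_iff _ hinj]; exact ub.ne_zero
    rw [← hq, hua, hub]
    rw [map_mul, map_mul, map_pow, map_pow, Units.val_mul, map_mul, hubinv]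
    rw [zpow_sub₀ hπ0, zpow_natCast, zpow_natCast]
    field_simp
  have huniq : ∀ (u u' : R) (n : ℤ), IsUnit u → IsUnit u' →
      algebraMap R F u * (algebraMap R F ϖ) ^ n = algebraMap R F u' → n = 0 := by
    intro u u' n hu hu' h
    rcases n with k | k
    · have hcast : (algebraMap R F ϖ) ^ (Int.ofNat k) = (algebraMap R F ϖ) ^ k :=
        zpow_natCast _ k
      have h1 : algebraMap R F (u * ϖ ^ k) = algebraMap R F u' := by
        rw [map_mul, map_pow, ← hcast]; exact h
      have h2 : u * ϖ ^ k = u' := hinj h1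
      by_contra hk
      have hk0 : k ≠ 0 := by simpa using hk
      obtain ⟨j, rfl⟩ : ∃ j, k = j + 1 := ⟨k - 1, by omega⟩
      have : ϖ ∣ u' := ⟨u * ϖ ^ j, by rw [← h2]; ring⟩
      exact hϖ.not_isUnit (isUnit_of_dvd_unit this hu')
    · exfalso
      have hπk : (algebraMap R F ϖ) ^ (k + 1) ≠ 0 := pow_ne_zero _ hπ0
      have h1 : algebraMap R F u = algebraMap R F u' * (algebraMap R F ϖ) ^ (k + 1) := by
        rw [← h, zpow_negSucc]
        field_simp
      have h2 : u = u' * ϖ ^ (k + 1) := hinj (by rw [map_mul, map_pow]; exact h1)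
      have : ϖ ∣ u := ⟨u' * ϖ ^ k, by rw [h2]; ring⟩
      exact hϖ.not_isUnit (isUnit_of_dvd_unit this hu)
  have hnonmem : ∀ r : R, ¬IsUnit r ↔ r ∈ IsLocalRing.maximalIdeal R :=
    fun r => ⟨(IsLocalRing.mem_maximalIdeal r).mpr, fun h h' => (IsLocalRing.mem_maximalIdeal r).mp h h'⟩
  constructor
  · -- anisotropic → d odd
    intro haniso
    by_contra hoddd
    rw [Int.not_odd_iff_even] at hoddd
    obtain ⟨m, hm⟩ := hoddd
    have hLdual := hdual m
    rw [show d - m = m by omega] at hLdual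
    have hLL : ∀ v ∈ Λ m, ∀ w ∈ Λ m, ∃ r : R, f v w = algebraMap R F r := by
      intro v hv
      exact (Set.ext_iff.mp hLdual v).mp hv
    have hdmem : ∀ v : V, (∀ w ∈ Λ m, ∃ r : R, f v w = algebraMap R F r) → v ∈ Λ m := by
      intro v hv
      exact (Set.ext_iff.mp hLdual v).mpr hv
    -- Step 1 : find e1 ∈ Λ m with f e1 e1 a unit
    have hE1 : ∃ e1 ∈ Λ m, ∃ a : R, IsUnit a ∧ f e1 e1 = algebraMap R F a := by
      by_contra hcon
      push_neg at hcon
      have hdiagnon : ∀ e ∈ Λ m, ∃ r : R, ¬IsUnit r ∧ f e e = algebraMap R F r := by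
        intro e he
        obtain ⟨r, hr⟩ := hLL e he e he
        exact ⟨r, fun hru => hcon e he r hru hr, hr⟩
      have hC1 : ∀ v ∈ Λ m, ∀ w ∈ Λ m, ∃ r : R, ¬IsUnit r ∧ f v w = algebraMap R F r := by
        intro v hv w hw
        obtain ⟨bb, hbb⟩ := hLL v hv w hw
        by_cases hbu : IsUnit bb
        · exfalso
          obtain ⟨r1, hr1n, hr1⟩ := hdiagnon v hv
          obtain ⟨r2, hr2n, hr2⟩ := hdiagnon w hw
          obtain ⟨r3, hr3n, hr3⟩ := hdiagnon (v + w) (add_mem hv hw)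
          obtain ⟨r4, hr4n, hr4⟩ := hdiagnon (v + uw • w)
            (add_mem hv (Submodule.smul_mem _ _ hw))
          have hvw : f w v = σ (f v w) := hherm v w
          have hsum : f (v+w) (v+w) = f v v + f v w + f w v + f w w := by
            rw [hadd₁, hadd₂, hadd₂]; ring
          have hkey1 : bb + τ bb = r3 - r1 - r2 := by
            apply hinj
            rw [map_add, hτ, ← hbb, map_sub, map_sub, ← hr1, ← hr2, ← hr3, ← hvw]
            linear_combination -hsum
          have hsum2 : f (v + uw • w) (v + uw • w) =
              f v v + algebraMap R F uw * f v w +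
                σ (algebraMap R F uw) * f w v +
                σ (algebraMap R F uw) * algebraMap R F uw * f w w := by
            have hrw : v + uw • w = (1:F) • v + (algebraMap R F uw) • w := by
              rw [one_smul, hsm]
            rw [hrw, hexp, map_one]
            ring
          have hkey2 : uw * bb + τ (uw * bb) = r4 - r1 - τ uw * uw * r2 := by
            apply hinj
            rw [map_add, hτ, map_sub, map_sub, map_mul, map_mul, map_mul, map_mul, hτ]
            rw [← hbb, ← hr1, ← hr2, ← hr4]
            rw [← hvw]
            linear_combination -hsum2
          have hm1 : bb + τ bb ∈ IsLocalRing.maximalIdeal R := by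
            rw [hkey1]
            exact sub_mem (sub_mem ((hnonmem r3).mp hr3n) ((hnonmem r1).mp hr1n))
              ((hnonmem r2).mp hr2n)
          have hm2 : uw * bb + τ (uw * bb) ∈ IsLocalRing.maximalIdeal R := by
            rw [hkey2]
            exact sub_mem (sub_mem ((hnonmem r4).mp hr4n) ((hnonmem r1).mp hr1n))
              (Ideal.mul_mem_left _ _ ((hnonmem r2).mp hr2n))
          obtain ⟨uw', huw'⟩ : ∃ uw', uw' * uw = 1 := ⟨↑huwu.unit⁻¹, huwu.unit.inv_mul⟩
          have hsplit : 2*bb = (bb + τ bb) + uw' * (uw * bb + τ (uw * bb)) := by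
            rw [map_mul, hτuw]
            linear_combination (τ bb - bb) * huw'
          have h2bbm : 2*bb ∈ IsLocalRing.maximalIdeal R := by
            rw [hsplit]
            exact add_mem hm1 (Ideal.mul_mem_left _ _ hm2)
          exact ((hnonmem (2*bb)).mpr h2bbm) (h2R.mul hbu)
        · exact ⟨bb, hbu, hbb⟩
      -- then Λ m ⊆ Λ (m+2), contradiction with strictness
      have hsub2 : ∀ v ∈ Λ m, v ∈ Λ (m + 2) := by
        intro v hv
        have hx : (algebraMap R F ϖ)⁻¹ • v ∈ Λ m := by
          apply hdmem
          intro w hw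
          obtain ⟨r, hrn, hr⟩ := hC1 v hv w hw
          obtain ⟨r', hr'⟩ := hnonunit_dvd r hrn
          refine ⟨r', ?_⟩
          rw [hsmul₁, map_inv₀, hϖσ, hr, hr', map_mul]
          field_simp
        have hv2 : v ∈ (Λ (m+2) : Set V) := by
          rw [hper m]
          refine ⟨(algebraMap R F ϖ)⁻¹ • v, hx, ?_⟩
          show algebraMap R F ϖ • (algebraMap R F ϖ)⁻¹ • v = v
          rw [smul_smul]
          rw [mul_inv_cancel₀ hπ0, one_smul]
        exact hv2
      have h2le : Λ (m+2) ≤ Λ (m+1) := by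
        have := hstrict (m+1)
        rw [show m+1+1 = m+2 by ring] at this
        exact this.le
      exact (hstrict m).not_ge (fun v hv => h2le (hsub2 v hv))
    obtain ⟨e1, he1, aα, haαu, hfa⟩ := hE1
    have hαne : algebraMap R F aα ≠ 0 := by
      rw [Ne, map_eq_zero_iff _ hinj]
      exact haαu.ne_zero
    -- Step 2 : basis and orthogonal complement
    obtain ⟨b1, b2, hb1, hb2, hcoords, hindep⟩ :=
      lattice_basis_aux R F V hdim (Λ m) (hlat m).1 (hlat m).2
    obtain ⟨a', haa'⟩ : ∃ a', aα * a' = 1 := ⟨↑haαu.unit⁻¹, haαu.unit.mul_inv⟩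
    obtain ⟨s1, hs1⟩ := hLL e1 he1 b1 hb1
    obtain ⟨s2, hs2⟩ := hLL e1 he1 b2 hb2
    set c1 : R := s1 * a' with hc1
    set c2 : R := s2 * a' with hc2
    set b1' : V := b1 - c1 • e1 with hb1'def
    set b2' : V := b2 - c2 • e1 with hb2'def
    have hb1'mem : b1' ∈ Λ m := sub_mem hb1 (Submodule.smul_mem _ _ he1)
    have hb2'mem : b2' ∈ Λ m := sub_mem hb2 (Submodule.smul_mem _ _ he1)
    have horth1 : f e1 b1' = 0 := by
      rw [hb1'def, hsub₂, hsm, hsmul₂, hfa, hs1, ← map_mul, hc1]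
      rw [show s1 * a' * aα = s1 * (aα * a') by ring, haa', mul_one, sub_self]
    have horth2 : f e1 b2' = 0 := by
      rw [hb2'def, hsub₂, hsm, hsmul₂, hfa, hs2, ← map_mul, hc2]
      rw [show s2 * a' * aα = s2 * (aα * a') by ring, haa', mul_one, sub_self]
    have hcoord' : ∀ x ∈ Λ m, ∃ r s : R, x = (r * c1 + s * c2) • e1 + (r • b1' + s • b2') := by
      intro x hx
      obtain ⟨r, s, hrs⟩ := hcoords x hx
      refine ⟨r, s, ?_⟩
      rw [hrs, hb1'def, hb2'def]
      module
    -- Step 3 : find e2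
    have hE2 : ∃ e2, e2 ∈ Λ m ∧ e2 ≠ 0 ∧ f e1 e2 = 0 ∧
        ∀ x ∈ Λ m, ∃ r s : R, x = r • e1 + s • e2 := by
      have hb2span : ∀ e : V, e ∈ Λ m → e ≠ 0 → f e1 e = 0 →
          (∀ x ∈ Λ m, ∃ r s : R, x = r • e1 + s • e) →
          ∃ e2, e2 ∈ Λ m ∧ e2 ≠ 0 ∧ f e1 e2 = 0 ∧
            ∀ x ∈ Λ m, ∃ r s : R, x = r • e1 + s • e2 :=
        fun e h1 h2 h3 h4 => ⟨e, h1, h2, h3, h4⟩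
      by_cases h1 : b1' = 0
      · by_cases h2 : b2' = 0
        · exfalso
          have hsp : Submodule.span F ((Λ m : Set V)) ≤ Submodule.span F {e1} := by
            rw [Submodule.span_le]
            intro x hx
            obtain ⟨r, s, hrs⟩ := hcoord' x hx
            rw [h1, h2, smul_zero, smul_zero, add_zero, add_zero] at hrs
            rw [hrs, hsm]
            exact Submodule.smul_mem _ _ (Submodule.mem_span_singleton_self e1)
          rw [(hlat m).2] at hsp
          have he1ne : e1 ≠ 0 := by
            intro h
            rw [h, hf0l] at hfa
            exact hαne hfa.symm
          have h3 : Module.finrank F ↥(Submodule.span F ({e1} : Set V)) = 1 :=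
            finrank_span_singleton he1ne
          have h4 : Submodule.span F ({e1} : Set V) = ⊤ := le_antisymm le_top hsp
          rw [h4, finrank_top, hdim] at h3
          omega
        · refine hb2span b2' hb2'mem h2 horth2 ?_
          intro x hx
          obtain ⟨r, s, hrs⟩ := hcoord' x hx
          refine ⟨r * c1 + s * c2, s, ?_⟩
          rw [hrs, h1, smul_zero, zero_add]
      · -- b1' ≠ 0
        have hind1 : ∀ x y : F, x • e1 + y • b1' = 0 → x = 0 ∧ y = 0 := by
          intro x y hxy
          have h0 : f e1 (x • e1 + y • b1') = 0 := by rw [hxy, hf0r]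
          rw [hadd₂, hsmul₂, hsmul₂, hfa, horth1, mul_zero, add_zero] at h0
          have hx0 : x = 0 := by
            rcases mul_eq_zero.mp h0 with h | h
            · exact h
            · exact absurd h hαne
          refine ⟨hx0, ?_⟩
          rw [hx0, zero_smul, zero_add] at hxy
          rcases smul_eq_zero.mp hxy with h | h
          · exact h
          · exact absurd h h1
        obtain ⟨xx, yy, hxy⟩ := hpair e1 b1' hind1 b2'
        have hxx0 : xx = 0 := by
          have h0 : f e1 b2' = xx * algebraMap R F aα := by
            rw [hxy, hadd₂, hsmul₂, hsmul₂, hfa, horth1, mul_zero, add_zero]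
          rw [horth2] at h0
          rcases mul_eq_zero.mp h0.symm with h | h
          · exact h
          · exact absurd h hαne
        rw [hxx0, zero_smul, zero_add] at hxy
        by_cases hyy : yy = 0
        · refine hb2span b1' hb1'mem h1 horth1 ?_
          intro x hx
          obtain ⟨r, s, hrs⟩ := hcoord' x hx
          refine ⟨r * c1 + s * c2, r, ?_⟩
          rw [hrs, hxy, hyy, zero_smul, smul_zero, add_zero]
        · obtain ⟨nn, un, hun, hμ⟩ := hval yy hyy
          rcases le_or_gt 0 nn with hn | hn
          · -- yy is integral : e2 := b1'
            have hry : ∃ ry : R, algebraMap R F ry = yy := by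
              refine ⟨un * ϖ ^ nn.toNat, ?_⟩
              rw [map_mul, map_pow, hμ]
              congr 1
              rw [← zpow_natCast]
              congr 1
              omega
            obtain ⟨ry, hry⟩ := hry
            have hxy2 : b2' = ry • b1' := by rw [hxy, hsm, hry]
            refine hb2span b1' hb1'mem h1 horth1 ?_
            intro x hx
            obtain ⟨r, s, hrs⟩ := hcoord' x hx
            refine ⟨r * c1 + s * c2, r + s * ry, ?_⟩
            rw [hrs, hxy2]
            module
          · -- yy⁻¹ is integral : e2 := b2'
            obtain ⟨uni, huni⟩ : ∃ z, un * z = 1 := ⟨↑hun.unit⁻¹, hun.unit.mul_inv⟩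
            have hyyne' : algebraMap R F un ≠ 0 := by
              rw [Ne, map_eq_zero_iff _ hinj]; exact hun.ne_zero
            have hry : ∃ ry : R, algebraMap R F ry = yy⁻¹ := by
              refine ⟨uni * ϖ ^ (-nn).toNat, ?_⟩
              rw [map_mul, map_pow, hμ]
              have h1' : algebraMap R F uni = (algebraMap R F un)⁻¹ := by
                have := congrArg (algebraMap R F) huni
                rw [map_mul, map_one] at this
                field_simp at this ⊢
                linear_combination this
              rw [h1', mul_inv, ← zpow_neg]
              congr 1
              rw [← zpow_natCast]
              congr 1
              omega
            obtain ⟨ry, hry⟩ := hry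
            have hb1eq : b1' = ry • b2' := by
              rw [hsm, hry, hxy, smul_smul, inv_mul_cancel₀ hyy, one_smul]
            have hb2ne : b2' ≠ 0 := by
              intro h
              rw [h, smul_zero] at hb1eq
              exact h1 hb1eq
            refine hb2span b2' hb2'mem hb2ne horth2 ?_
            intro x hx
            obtain ⟨r, s, hrs⟩ := hcoord' x hx
            refine ⟨r * c1 + s * c2, r * ry + s, ?_⟩
            rw [hrs, hb1eq]
            module
    -- Step 4 : the quadratic form on the self-dual lattice and the norm equation
    obtain ⟨e2, he2mem, he2ne, horthe2, hLcoord⟩ := hE2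
    obtain ⟨bβ, hbβ⟩ := hLL e2 he2mem e2 he2mem
    have hfe2e1 : f e2 e1 = 0 := by rw [hherm e1 e2, horthe2, map_zero]
    have hinde : ∀ x y : F, x • e1 + y • e2 = 0 → x = 0 ∧ y = 0 := by
      intro x y hxy
      have h0 : f e1 (x • e1 + y • e2) = 0 := by rw [hxy, hf0r]
      rw [hadd₂, hsmul₂, hsmul₂, hfa, horthe2, mul_zero, add_zero] at h0
      have hx0 : x = 0 := by
        rcases mul_eq_zero.mp h0 with h | h
        · exact h
        · exact absurd h hαne
      refine ⟨hx0, ?_⟩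
      rw [hx0, zero_smul, zero_add] at hxy
      rcases smul_eq_zero.mp hxy with h | h
      · exact h
      · exact absurd h he2ne
    have hbβu : IsUnit bβ := by
      by_contra hn
      obtain ⟨b', hb'⟩ := hnonunit_dvd bβ hn
      have hx : (algebraMap R F ϖ)⁻¹ • e2 ∈ Λ m := by
        apply hdmem
        intro w hw
        obtain ⟨r, s, hrs⟩ := hLcoord w hw
        refine ⟨s * b', ?_⟩
        rw [hrs, hsmul₁, map_inv₀, hϖσ, hadd₂, hsm r, hsm s, hsmul₂, hsmul₂, hfe2e1, hbβ, hb']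
        rw [map_mul (algebraMap R F), map_mul (algebraMap R F)]
        field_simp
        ring
      obtain ⟨r, s, hrs⟩ := hLcoord _ hx
      have hz : (algebraMap R F r) • e1 + (algebraMap R F s - (algebraMap R F ϖ)⁻¹) • e2 = 0 := by
        rw [sub_smul, ← hsm, ← hsm, hrs]
        module
      obtain ⟨_, h2'⟩ := hinde _ _ hz
      have hs' : algebraMap R F s = (algebraMap R F ϖ)⁻¹ := sub_eq_zero.mp h2'
      have hππ : ϖ * s = 1 := by
        apply hinj
        rw [map_mul, map_one, hs']
        field_simp
      exact hϖ.not_isUnit (IsUnit.of_mul_eq_one _ hππ)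
    have hσα : σ (algebraMap R F aα) = algebraMap R F aα := by
      rw [← hfa]; exact (hherm e1 e1).symm
    have hσβ : σ (algebraMap R F bβ) = algebraMap R F bβ := by
      rw [← hbβ]; exact (hherm e2 e2).symm
    have hτα : τ aα = aα := hinj (by rw [hτ, hσα])
    have hτβ : τ bβ = bβ := hinj (by rw [hτ, hσβ])
    have hτa' : τ a' = a' := by
      have h1 : aα * τ a' = 1 := by
        have := congrArg τ haa'
        rwa [map_mul, map_one, hτα] at this
      have h2 : aα * τ a' = aα * a' := by rw [h1, haa']
      exact mul_left_cancel₀ haαu.ne_zero h2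
    set u₀ : R := -(bβ * a') with hu₀def
    have hu₀u : IsUnit u₀ := by
      apply IsUnit.neg
      exact hbβu.mul (IsUnit.of_mul_eq_one (a := a') aα (by rw [mul_comm]; exact haa'))
    have hτu₀ : τ u₀ = u₀ := by rw [hu₀def, map_neg, map_mul, hτβ, hτa']
    obtain ⟨t, ht⟩ := solver_aux R hodd τ hτ2 ϖ hϖ hτϖ uw huwu hτuw u₀ hu₀u hτu₀
    set vv : V := algebraMap R F t • e1 + e2 with hvvdef
    have hR0 : τ t * t * aα + bβ = 0 := by
      have h1 : τ t * t = u₀ := by rw [mul_comm]; exact ht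
      rw [h1, hu₀def]
      linear_combination (-bβ) * haa'
    have hfvv : f vv vv = 0 := by
      have hrw : vv = (algebraMap R F t) • e1 + (1:F) • e2 := by rw [hvvdef, one_smul]
      rw [hrw, hexp, map_one, horthe2, hfe2e1, hfa, hbβ, ← hτ]
      have := congrArg (algebraMap R F) hR0
      rw [map_add, map_mul, map_mul, map_zero] at this
      linear_combination this
    have hvvne : vv ≠ 0 := by
      intro h
      have := hinde (algebraMap R F t) 1 (by rw [one_smul, ← hvvdef]; exact h)
      simpa using this.2
    exact hvvne (haniso vv hfvv)
  · -- d odd → anisotropic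
    intro hoddd v₀ hfv₀
    by_contra hv₀
    obtain ⟨u, hu⟩ : ∃ u : V, f v₀ u ≠ 0 := by
      by_contra h
      push_neg at h
      exact hv₀ (hnd v₀ h)
    have hσ2' : σ (2 : F) = 2 := by
      rw [show (2:F) = 1 + 1 by norm_num, map_add, map_one]
    obtain ⟨u', hfu'⟩ : ∃ u' : V, f v₀ u' = 1 :=
      ⟨(f v₀ u)⁻¹ • u, by rw [hsmul₂, inv_mul_cancel₀ hu]⟩
    have hfu'v : f u' v₀ = 1 := by rw [hherm v₀ u', hfu', map_one]
    have hσγ : σ (f u' u') = f u' u' := (hherm u' u').symm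
    obtain ⟨w, hfvw, hfww⟩ : ∃ w : V, f v₀ w = 1 ∧ f w w = 0 := by
      refine ⟨u' - (f u' u' / 2) • v₀, ?_, ?_⟩
      · rw [hsub₂, hsmul₂, hfu', hfv₀, mul_zero, sub_zero]
      · simp only [hsub₁, hsub₂, hsmul₁, hsmul₂]
        rw [hfu', hfu'v, hfv₀, map_div₀, hσγ, hσ2']
        field_simp
        ring
    have hfwv : f w v₀ = 1 := by rw [hherm v₀ w, hfvw, map_one]
    have hindvw : ∀ x y : F, x • v₀ + y • w = 0 → x = 0 ∧ y = 0 := by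
      intro x y hxy
      have h1 : f v₀ (x • v₀ + y • w) = 0 := by rw [hxy, hf0r]
      rw [hadd₂, hsmul₂, hsmul₂, hfv₀, hfvw, mul_zero, mul_one, zero_add] at h1
      have h2 : f (x • v₀ + y • w) w = 0 := by rw [hxy, hf0l]
      rw [hadd₁, hsmul₁, hsmul₁, hfvw, hfww, mul_zero, mul_one, add_zero] at h2
      have hx0 : x = 0 := by
        have := congrArg σ h2
        rwa [hσ2, map_zero] at this
      exact ⟨hx0, h1⟩
    obtain ⟨m, hm⟩ := hoddd
    have hdualL := hdual (m+1)
    rw [show d - (m+1) = m by omega] at hdualL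
    have hdualM := hdual m
    rw [show d - m = m + 1 by omega] at hdualM
    have hML : ∀ z ∈ Λ m, ∀ y ∈ Λ (m+1), ∃ r, f z y = algebraMap R F r := by
      intro z hz
      exact (Set.ext_iff.mp hdualL z).mp hz
    have hMLmem : ∀ z : V, (∀ y ∈ Λ (m+1), ∃ r, f z y = algebraMap R F r) → z ∈ Λ m := by
      intro z hz
      exact (Set.ext_iff.mp hdualL z).mpr hz
    have hLM : ∀ z ∈ Λ (m+1), ∀ y ∈ Λ m, ∃ r, f z y = algebraMap R F r := by
      intro z hz
      exact (Set.ext_iff.mp hdualM z).mp hz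
    obtain ⟨g1, g2, hg1, hg2, hMcoords, hMindep⟩ :=
      lattice_basis_aux R F V hdim (Λ m) (hlat m).1 (hlat m).2
    have hstrict2 : Λ (m+2) < Λ (m+1) := by
      have := hstrict (m+1)
      rwa [show m+1+1 = m+2 by ring] at this
    obtain ⟨xx, hxxL, hxxnot⟩ := SetLike.exists_of_lt hstrict2
    have hxxM : xx ∈ Λ m := (hstrict m).le hxxL
    obtain ⟨r1, r2, hrr⟩ := hMcoords xx hxxM
    have hper2 : ∀ z ∈ Λ m, ϖ • z ∈ Λ (m+2) := by
      intro z hz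
      have : ϖ • z ∈ (Λ (m+2) : Set V) := by
        rw [hper m]
        exact ⟨z, hz, (hsm ϖ z).symm⟩
      exact this
    have hrunit : IsUnit r1 ∨ IsUnit r2 := by
      by_contra hcon
      push_neg at hcon
      obtain ⟨t1, ht1⟩ := hnonunit_dvd r1 hcon.1
      obtain ⟨t2, ht2⟩ := hnonunit_dvd r2 hcon.2
      apply hxxnot
      have hx : xx = ϖ • (t1 • g1 + t2 • g2) := by rw [hrr, ht1, ht2]; module
      rw [hx]
      exact hper2 _ (add_mem (Submodule.smul_mem _ _ hg1) (Submodule.smul_mem _ _ hg2))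
    have main : ∀ (G1 G2 : V) (R1 R2 : R), G1 ∈ Λ m → G2 ∈ Λ m → IsUnit R1 →
        xx = R1 • G1 + R2 • G2 →
        (∀ x' ∈ Λ m, ∃ r s : R, x' = r • G1 + s • G2) →
        (∀ x y : F, x • G1 + y • G2 = 0 → x = 0 ∧ y = 0) → False := by
      clear hrr hrunit hMcoords hMindep hg1 hg2
      intro G1 G2 R1 R2 hG1 hG2 hR1u hxxeq hMc hMi
      obtain ⟨R1', hR1'⟩ : ∃ R1', R1 * R1' = 1 := ⟨↑hR1u.unit⁻¹, hR1u.unit.mul_inv⟩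
      have hMc2 : ∀ x' ∈ Λ m, ∃ a b : R, x' = a • xx + b • G2 := by
        intro x' hx'
        obtain ⟨r, s, hrs⟩ := hMc x' hx'
        refine ⟨r * R1', s - r * R1' * R2, ?_⟩
        rw [hxxeq,
          show (r * R1') • (R1 • G1 + R2 • G2) + (s - r * R1' * R2) • G2
            = (r * (R1 * R1')) • G1 + s • G2 from by module,
          hR1', mul_one]
        exact hrs
      have hMi2 : ∀ x y : F, x • xx + y • G2 = 0 → x = 0 ∧ y = 0 := by
        intro x y h
        have h' : (x * algebraMap R F R1) • G1 + (x * algebraMap R F R2 + y) • G2 = 0 := by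
          rw [← h, hxxeq, hsm R1, hsm R2]
          module
        obtain ⟨ha, hb⟩ := hMi _ _ h'
        have hR1ne : algebraMap R F R1 ≠ 0 := by
          rw [Ne, map_eq_zero_iff _ hinj]; exact hR1u.ne_zero
        have hx0 : x = 0 := by
          rcases mul_eq_zero.mp ha with h'' | h''
          · exact h''
          · exact absurd h'' hR1ne
        refine ⟨hx0, ?_⟩
        rw [hx0, zero_mul, zero_add] at hb
        exact hb
      have hϖG2L : ϖ • G2 ∈ Λ (m+1) := hstrict2.le (hper2 G2 hG2)
      have hLc : ∀ z ∈ Λ (m+1), ∃ a b : R, z = a • xx + b • (ϖ • G2) := by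
        intro z hz
        obtain ⟨a, b, hab⟩ := hMc2 z ((hstrict m).le hz)
        by_cases hbu : IsUnit b
        · exfalso
          obtain ⟨b', hbb'⟩ : ∃ b', b * b' = 1 := ⟨↑hbu.unit⁻¹, hbu.unit.mul_inv⟩
          have hbG2 : b • G2 ∈ Λ (m+1) := by
            have hx : b • G2 = z - a • xx := by rw [hab]; module
            rw [hx]
            exact sub_mem hz (Submodule.smul_mem _ _ hxxL)
          have hG2L : G2 ∈ Λ (m+1) := by
            have hx : G2 = b' • (b • G2) := by
              rw [smul_smul, mul_comm b' b, hbb', one_smul]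
            rw [hx]
            exact Submodule.smul_mem _ _ hbG2
          apply (hstrict m).not_ge
          intro y hy
          obtain ⟨ry, sy, hy'⟩ := hMc2 y hy
          rw [hy']
          exact add_mem (Submodule.smul_mem _ _ hxxL) (Submodule.smul_mem _ _ hG2L)
        · obtain ⟨b'', hb''⟩ := hnonunit_dvd b hbu
          refine ⟨a, b'', ?_⟩
          rw [hab, hb'']
          module
      set E2 : V := algebraMap R F ϖ • G2 with hE2def
      clear_value E2
      have hE2eq : ϖ • G2 = E2 := by rw [hE2def, ← hsm]
      have hE2L : E2 ∈ Λ (m+1) := by rw [← hE2eq]; exact hϖG2L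
      have hE2M : E2 ∈ Λ m := (hstrict m).le hE2L
      have hiE : ∀ x y : F, x • xx + y • E2 = 0 → x = 0 ∧ y = 0 := by
        intro x y h
        have h' : x • xx + (y * algebraMap R F ϖ) • G2 = 0 := by
          rw [← h, hE2def]
          module
        obtain ⟨hx0, hy0⟩ := hMi2 _ _ h'
        refine ⟨hx0, ?_⟩
        rcases mul_eq_zero.mp hy0 with h'' | h''
        · exact h''
        · exact absurd h'' hπ0
      set Δ : F := f xx xx * f E2 E2 - f xx E2 * f E2 xx with hΔdef
      clear_value Δ
      have hΔne : Δ ≠ 0 := by rw [hΔdef]; exact hgram xx E2 hiE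
      set D1 : V := σ (f E2 E2 / Δ) • xx + σ (-(f xx E2) / Δ) • E2 with hD1def
      set D2 : V := σ (-(f E2 xx) / Δ) • xx + σ (f xx xx / Δ) • E2 with hD2def
      clear_value D1 D2
      have hD1E1 : f D1 xx = 1 := by
        rw [hD1def, hadd₁, hsmul₁, hsmul₁, hσ2, hσ2]
        field_simp
        rw [hΔdef]
        try ring
      have hD1E2 : f D1 E2 = 0 := by
        rw [hD1def, hadd₁, hsmul₁, hsmul₁, hσ2, hσ2]
        field_simp
        try ring
      have hD2E1 : f D2 xx = 0 := by
        rw [hD2def, hadd₁, hsmul₁, hsmul₁, hσ2, hσ2]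
        field_simp
        try ring
      have hD2E2 : f D2 E2 = 1 := by
        rw [hD2def, hadd₁, hsmul₁, hsmul₁, hσ2, hσ2]
        field_simp
        rw [hΔdef]
        try ring
      have hspanE := hpair xx E2 hiE
      have hP : ∀ z : V, z = σ (f z xx) • D1 + σ (f z E2) • D2 := by
        intro z
        have h1 : f (z - (σ (f z xx) • D1 + σ (f z E2) • D2)) xx = 0 := by
          rw [hsub₁, hadd₁, hsmul₁, hsmul₁, hσ2, hσ2, hD1E1, hD2E1]
          ring
        have h2 : f (z - (σ (f z xx) • D1 + σ (f z E2) • D2)) E2 = 0 := by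
          rw [hsub₁, hadd₁, hsmul₁, hsmul₁, hσ2, hσ2, hD1E2, hD2E2]
          ring
        have h3 : z - (σ (f z xx) • D1 + σ (f z E2) • D2) = 0 := by
          apply hnd
          intro y
          obtain ⟨xc, yc, hy⟩ := hspanE y
          rw [hy, hadd₂, hsmul₂, hsmul₂, h1, h2]
          ring
        exact (sub_eq_zero.mp h3)
      have hDmem : ∀ z : V, (∃ rr : R, f z xx = algebraMap R F rr) →
          (∃ rr : R, f z E2 = algebraMap R F rr) → z ∈ Λ m := by
        intro z hz1 hz2
        apply hMLmem
        intro y hy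
        obtain ⟨a, b, hab⟩ := hLc y hy
        rw [hE2eq] at hab
        obtain ⟨rr1, hrr1⟩ := hz1
        obtain ⟨rr2, hrr2⟩ := hz2
        refine ⟨a * rr1 + b * rr2, ?_⟩
        rw [hab, hadd₂, hsm a, hsm b, hsmul₂, hsmul₂, hrr1, hrr2, map_add, map_mul, map_mul]
      have hD1M : D1 ∈ Λ m := hDmem D1 ⟨1, by rw [hD1E1, map_one]⟩ ⟨0, by rw [hD1E2, map_zero]⟩
      have hD2M : D2 ∈ Λ m := hDmem D2 ⟨0, by rw [hD2E1, map_zero]⟩ ⟨1, by rw [hD2E2, map_one]⟩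
      obtain ⟨G11, hG11⟩ := hLM xx hxxL xx hxxM
      obtain ⟨G12, hG12⟩ := hLM xx hxxL E2 hE2M
      obtain ⟨P1, hP1⟩ := hML G2 hG2 xx hxxL
      obtain ⟨P2, hP2⟩ := hML G2 hG2 E2 hE2L
      have hE1D : xx = algebraMap R F (τ G11) • D1 + algebraMap R F (τ G12) • D2 := by
        have := hP xx
        rwa [hG11, hG12, ← hτ, ← hτ] at this
      have hG2D : G2 = algebraMap R F (τ P1) • D1 + algebraMap R F (τ P2) • D2 := by
        have := hP G2
        rwa [hP1, hP2, ← hτ, ← hτ] at this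
      obtain ⟨S11, S12, hS1⟩ := hMc2 D1 hD1M
      obtain ⟨S21, S22, hS2⟩ := hMc2 D2 hD2M
      have huniqEG : ∀ p q p' q' : F, p • xx + q • G2 = p' • xx + q' • G2 → p = p' ∧ q = q' := by
        intro p q p' q' h
        have hz : (p - p') • xx + (q - q') • G2 = 0 := by
          have hx : (p - p') • xx + (q - q') • G2
              = (p • xx + q • G2) - (p' • xx + q' • G2) := by module
          rw [hx, h, sub_self]
        obtain ⟨h1', h2'⟩ := hMi2 _ _ hz
        exact ⟨sub_eq_zero.mp h1', sub_eq_zero.mp h2'⟩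
      have heq1 : xx = (algebraMap R F (τ G11 * S11 + τ G12 * S21)) • xx +
          (algebraMap R F (τ G11 * S12 + τ G12 * S22)) • G2 := by
        calc xx = algebraMap R F (τ G11) • D1 + algebraMap R F (τ G12) • D2 := hE1D
        _ = algebraMap R F (τ G11) • (S11 • xx + S12 • G2) +
            algebraMap R F (τ G12) • (S21 • xx + S22 • G2) := by rw [← hS1, ← hS2]
        _ = (algebraMap R F (τ G11 * S11 + τ G12 * S21)) • xx +
            (algebraMap R F (τ G11 * S12 + τ G12 * S22)) • G2 := by
              rw [hsm S11, hsm S12, hsm S21, hsm S22, map_add, map_add,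
                map_mul, map_mul, map_mul, map_mul]
              module
      have heq2 : G2 = (algebraMap R F (τ P1 * S11 + τ P2 * S21)) • xx +
          (algebraMap R F (τ P1 * S12 + τ P2 * S22)) • G2 := by
        calc G2 = algebraMap R F (τ P1) • D1 + algebraMap R F (τ P2) • D2 := hG2D
        _ = algebraMap R F (τ P1) • (S11 • xx + S12 • G2) +
            algebraMap R F (τ P2) • (S21 • xx + S22 • G2) := by rw [← hS1, ← hS2]
        _ = (algebraMap R F (τ P1 * S11 + τ P2 * S21)) • xx +
            (algebraMap R F (τ P1 * S12 + τ P2 * S22)) • G2 := by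
              rw [hsm S11, hsm S12, hsm S21, hsm S22, map_add, map_add,
                map_mul, map_mul, map_mul, map_mul]
              module
      have hxx1 : xx = (algebraMap R F (1:R)) • xx + (algebraMap R F (0:R)) • G2 := by
        rw [map_one, map_zero, one_smul, zero_smul, add_zero]
      have hG21 : G2 = (algebraMap R F (0:R)) • xx + (algebraMap R F (1:R)) • G2 := by
        rw [map_one, map_zero, one_smul, zero_smul, zero_add]
      obtain ⟨e11, e12⟩ := huniqEG _ _ _ _ (heq1.symm.trans hxx1)
      obtain ⟨e21, e22⟩ := huniqEG _ _ _ _ (heq2.symm.trans hG21)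
      have E11 : τ G11 * S11 + τ G12 * S21 = 1 := hinj e11
      have E12 : τ G11 * S12 + τ G12 * S22 = 0 := hinj e12
      have E21 : τ P1 * S11 + τ P2 * S21 = 0 := hinj e21
      have E22 : τ P1 * S12 + τ P2 * S22 = 1 := hinj e22
      set tD : R := τ G11 * τ P2 - τ G12 * τ P1 with htDdef
      clear_value tD
      have htDu : IsUnit tD := by
        apply IsUnit.of_mul_eq_one (S11 * S22 - S12 * S21)
        have hx : tD * (S11*S22 - S12*S21) =
            (τ G11 * S11 + τ G12 * S21) * (τ P1 * S12 + τ P2 * S22) -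
            (τ G11 * S12 + τ G12 * S22) * (τ P1 * S11 + τ P2 * S21) := by
          rw [htDdef]; ring
        rw [hx, E11, E12, E21, E22]
        ring
      -- determinant computations
      obtain ⟨a1, b1c, hE1c⟩ := hpair v₀ w hindvw xx
      obtain ⟨a2, b2c, hE2c⟩ := hpair v₀ w hindvw E2
      have hhyp : f v₀ v₀ * f w w - f v₀ w * f w v₀ = -1 := by
        rw [hfv₀, hfww, hfvw, hfwv]; ring
      have hΔhyp : Δ = -(σ (a1*b2c - b1c*a2) * (a1*b2c - b1c*a2)) := by
        rw [hΔdef, hE1c, hE2c, hdt, hhyp]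
        ring
      set sL : F := a1*b2c - b1c*a2 with hsLdef
      clear_value sL
      have hsLne : sL ≠ 0 := by
        intro h
        apply hΔne
        rw [hΔhyp, h, map_zero]
        ring
      set ΔM : F := f xx xx * f G2 G2 - f xx G2 * f G2 xx with hΔMdef
      clear_value ΔM
      have hrw1 : (1:F) • xx + (0:F) • G2 = xx := by module
      have hrw2 : (0:F) • xx + (algebraMap R F ϖ) • G2 = E2 := by rw [hE2def]; module
      have hΔπ : Δ = σ (algebraMap R F ϖ) * algebraMap R F ϖ * ΔM := by
        have hx := hdt xx G2 1 0 0 (algebraMap R F ϖ)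
        rw [hrw1, hrw2] at hx
        have hc : (1:F) * algebraMap R F ϖ - 0 * 0 = algebraMap R F ϖ := by ring
        rw [hΔdef, hx, hc, ← hΔMdef]
      set ΔH : F := f D1 D1 * f D2 D2 - f D1 D2 * f D2 D1 with hΔHdef
      clear_value ΔH
      have hσΔne : σ Δ ≠ 0 := fun h => hΔne (by rw [← hσ2 Δ, h, map_zero])
      have hΔH : ΔH = (σ Δ)⁻¹ := by
        have hx := hdt xx E2 (σ (f E2 E2 / Δ)) (σ (-(f xx E2) / Δ))
          (σ (-(f E2 xx) / Δ)) (σ (f xx xx / Δ))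
        rw [← hD1def, ← hD2def] at hx
        have hcoef : σ (f E2 E2 / Δ) * σ (f xx xx / Δ) -
            σ (-(f xx E2) / Δ) * σ (-(f E2 xx) / Δ) = σ Δ⁻¹ := by
          rw [← map_mul, ← map_mul, ← map_sub]
          congr 1
          have hq : f E2 E2 / Δ * (f xx xx / Δ) - -f xx E2 / Δ * (-f E2 xx / Δ)
              = (f xx xx * f E2 E2 - f xx E2 * f E2 xx) / (Δ * Δ) := by ring
          rw [hq, ← hΔdef]
          rw [div_mul_eq_div_div, div_self hΔne, one_div]
        rw [hΔHdef, hx, ← hΔdef, hcoef, hσ2, map_inv₀]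
        field_simp
        try ring
      have hΔMT : ΔM = σ (algebraMap R F tD) * algebraMap R F tD * ΔH := by
        have hx := hdt D1 D2 (algebraMap R F (τ G11)) (algebraMap R F (τ G12))
          (algebraMap R F (τ P1)) (algebraMap R F (τ P2))
        rw [← hE1D, ← hG2D] at hx
        have hcast : algebraMap R F (τ G11) * algebraMap R F (τ P2) -
            algebraMap R F (τ G12) * algebraMap R F (τ P1) = algebraMap R F tD := by
          rw [htDdef, map_sub, map_mul, map_mul]
        rw [hΔMdef, hx, ← hΔHdef, hcast]
      have hσΔ : σ Δ = Δ := by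
        rw [hΔhyp, map_neg, map_mul, hσ2]
        ring
      have hfin : Δ * Δ = algebraMap R F ϖ * algebraMap R F ϖ *
          (algebraMap R F (τ tD) * algebraMap R F tD) := by
        have h1 : Δ = algebraMap R F ϖ * algebraMap R F ϖ *
            (algebraMap R F (τ tD) * algebraMap R F tD * Δ⁻¹) := by
          calc Δ = σ (algebraMap R F ϖ) * algebraMap R F ϖ * ΔM := hΔπ
          _ = algebraMap R F ϖ * algebraMap R F ϖ *
              (σ (algebraMap R F tD) * algebraMap R F tD * ΔH) := by rw [hϖσ, hΔMT]
          _ = algebraMap R F ϖ * algebraMap R F ϖ *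
              (algebraMap R F (τ tD) * algebraMap R F tD * Δ⁻¹) := by
                rw [hΔH, hσΔ, ← hτ]
        have h2 : Δ * Δ = (algebraMap R F ϖ * algebraMap R F ϖ *
            (algebraMap R F (τ tD) * algebraMap R F tD * Δ⁻¹)) * Δ := by rw [← h1]
        rw [h2]
        field_simp
      obtain ⟨nL, uL, huL, huLe⟩ := hval sL hsLne
      have hσsL : σ sL = algebraMap R F (τ uL) * (algebraMap R F ϖ) ^ nL := by
        rw [huLe, map_mul, map_zpow₀, hϖσ, hτ]
      have hΔval : Δ = -(algebraMap R F (τ uL * uL) * (algebraMap R F ϖ)^(2*nL)) := by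
        have hzz : (algebraMap R F ϖ)^nL * (algebraMap R F ϖ)^nL
            = (algebraMap R F ϖ)^(2*nL) := by
          rw [← zpow_add₀ hπ0]; congr 1; ring
        calc Δ = -(σ sL * sL) := hΔhyp
        _ = -(algebraMap R F (τ uL) * algebraMap R F uL *
            ((algebraMap R F ϖ)^nL * (algebraMap R F ϖ)^nL)) := by
              rw [hσsL, huLe]; ring
        _ = -(algebraMap R F (τ uL * uL) * (algebraMap R F ϖ)^(2*nL)) := by
              rw [hzz, map_mul]
      have h4 : Δ * Δ = algebraMap R F ((τ uL * uL) * (τ uL * uL)) *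
          (algebraMap R F ϖ)^(4*nL) := by
        have hzz : (algebraMap R F ϖ)^(2*nL) * (algebraMap R F ϖ)^(2*nL)
            = (algebraMap R F ϖ)^(4*nL) := by
          rw [← zpow_add₀ hπ0]; congr 1; ring
        have hx : Δ * Δ = (algebraMap R F (τ uL * uL) * (algebraMap R F ϖ)^(2*nL)) *
            (algebraMap R F (τ uL * uL) * (algebraMap R F ϖ)^(2*nL)) := by
          rw [hΔval]; ring
        rw [hx, map_mul (algebraMap R F) (τ uL * uL) (τ uL * uL)]
        linear_combination (algebraMap R F (τ uL * uL) * algebraMap R F (τ uL * uL)) * hzz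
      have hπ2 : (algebraMap R F ϖ)^(2:ℤ) = algebraMap R F ϖ * algebraMap R F ϖ := by
        rw [show (2:ℤ) = 1 + 1 by ring, zpow_add₀ hπ0, zpow_one]
      have h5 : algebraMap R F ((τ uL*uL)*(τ uL*uL)) * (algebraMap R F ϖ)^(4*nL)
          = (algebraMap R F ϖ)^(2:ℤ) * algebraMap R F (τ tD * tD) := by
        rw [← h4, hfin, hπ2, map_mul]
      have hkey : algebraMap R F ((τ uL * uL) * (τ uL * uL)) *
          ((algebraMap R F ϖ) ^ (4*nL - 2)) = algebraMap R F (τ tD * tD) := by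
        have hsplit : (algebraMap R F ϖ)^(4*nL - 2)
            = (algebraMap R F ϖ)^(4*nL) * (algebraMap R F ϖ)^(-2:ℤ) := by
          rw [show (4*nL - 2 : ℤ) = 4*nL + -2 from by ring, zpow_add₀ hπ0]
        have hcancel : (algebraMap R F ϖ)^(2:ℤ) * (algebraMap R F ϖ)^(-2:ℤ) = 1 := by
          rw [← zpow_add₀ hπ0]
          norm_num
        calc algebraMap R F ((τ uL*uL)*(τ uL*uL)) * (algebraMap R F ϖ)^(4*nL - 2)
            = (algebraMap R F ((τ uL*uL)*(τ uL*uL)) * (algebraMap R F ϖ)^(4*nL)) *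
              (algebraMap R F ϖ)^(-2:ℤ) := by rw [hsplit]; ring
        _ = ((algebraMap R F ϖ)^(2:ℤ) * algebraMap R F (τ tD * tD)) *
              (algebraMap R F ϖ)^(-2:ℤ) := by rw [h5]
        _ = algebraMap R F (τ tD * tD) * ((algebraMap R F ϖ)^(2:ℤ) *
              (algebraMap R F ϖ)^(-2:ℤ)) := by ring
        _ = algebraMap R F (τ tD * tD) := by rw [hcancel, mul_one]
      have hfinal := huniq ((τ uL * uL) * (τ uL * uL)) (τ tD * tD) (4*nL - 2)
        (((hτunit uL huL).mul huL).mul ((hτunit uL huL).mul huL))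
        ((hτunit tD htDu).mul htDu) hkey
      omega
    rcases hrunit with h | h
    · exact main g1 g2 r1 r2 hg1 hg2 h hrr hMcoords hMindep
    · apply main g2 g1 r2 r1 hg2 hg1 h (by rw [hrr]; module)
      · intro x' hx'
        obtain ⟨r, s, hrs⟩ := hMcoords x' hx'
        exact ⟨s, r, by rw [hrs]; module⟩
      · intro x y hxy
        have := hMindep y x (by rw [← hxy]; module)
        exact ⟨this.2, this.1⟩
end

section
/- Let $\Lambda$ be a strict $\mathfrak{o}_F$-lattice sequence of period $e$ in an $F$-vector space $V$ of dimension $N$, and let $n$ be an integer coprime to $e$. For $\beta \in \mathfrak{a}_{-n}(\Lambda)$ set $y_\beta = \varpi^{n}\beta^{e}$ (here $(e,n)=1$). Write the characteristic polynomial of $y_\beta$ modulo $\mathfrak{p}_F$ as $\phi_\beta(X) = \prod_{i \in \mathbf{Z}/e\mathbf{Z}} \phi_i(X)$, where $\phi_i$ is the characteristic polynomial of the map induced by $y_\beta$ on $\overline{\Lambda}(i) = \Lambda(i)/\Lambda(i+1)$. If $j$ is chosen with $n_j = \dim_{k_F}\overline{\Lambda}(j)$ minimal, then $\phi_\beta(X)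 = \phi_j(X)^e \cdot X^{m}$ with $m = N - e\, n_j$. -/
open Polynomial

open Matrix

lemma my_det_blockDiagonal' {R ι : Type*} [CommRing R] [Fintype ι] [DecidableEq ι]
    {m : ι → Type*} [∀ i, Fintype (m i)] [∀ i, DecidableEq (m i)]
    (d : ∀ i, Matrix (m i) (m i) R) :
    (Matrix.blockDiagonal' d).det = ∏ i, (d i).det := by
  letI : LinearOrder ι := LinearOrder.lift' (Fintype.equivFin ι) (Fintype.equivFin ι).injective
  rw [(blockTriangular_blockDiagonal' d).det_fintype]
  congr 1
  ext i
  let e : m i ≃ {a : Σ j, m j // a.1 = i} :=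
    { toFun := fun x => ⟨⟨i, x⟩, rfl⟩
      invFun := fun a => cast (congrArg m a.2) a.1.2
      left_inv := fun x => rfl
      right_inv := by rintro ⟨⟨j, x⟩, rfl⟩; rfl }
  rw [← Matrix.det_submatrix_equiv_self e ((blockDiagonal' d).toSquareBlock Sigma.fst i)]
  congr 1
  ext x y
  simp [e, Matrix.toSquareBlock_def, Matrix.submatrix]

lemma my_charpoly_blockDiagonal' {R ι : Type*} [CommRing R] [Fintype ι] [DecidableEq ι]
    {m : ι → Type*} [∀ i, Fintype (m i)] [∀ i, DecidableEq (m i)]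
    (d : ∀ i, Matrix (m i) (m i) R) :
    (Matrix.blockDiagonal' d).charpoly = ∏ i, (d i).charpoly := by
  have h : charmatrix (Matrix.blockDiagonal' d) =
      Matrix.blockDiagonal' fun i => charmatrix (d i) := by
    have : ∀ i, charmatrix (d i) = (X : R[X]) • (1 : Matrix (m i) (m i) R[X]) - (d i).map C := by
      intro i; rw [charmatrix]; congr 1; simp [Matrix.scalar, smul_eq_diagonal_mul]
    ext ⟨i, x⟩ ⟨i', y⟩ : 1
    rcases eq_or_ne i i' with rfl | hii
    · rcases eq_or_ne x y with rfl | hxy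
      · simp [Matrix.blockDiagonal'_apply_eq]
      · rw [Matrix.charmatrix_apply_ne _ _ _ (by simp [hxy])]
        simp only [Matrix.blockDiagonal'_apply_eq]
        rw [Matrix.charmatrix_apply_ne _ _ _ hxy]
    · rw [Matrix.charmatrix_apply_ne _ _ _ (by simp [hii])]
      simp only [Matrix.blockDiagonal'_apply_ne _ _ _ hii, map_zero, neg_zero]
  rw [Matrix.charpoly, h, my_det_blockDiagonal']
  rfl

lemma my_charpoly_eq_prod {k V : Type*} {ι : Type} [Field k] [AddCommGroup V] [Module k V]
    [FiniteDimensional k V] [Fintype ι] [DecidableEq ι]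
    {N : ι → Submodule k V} (h : DirectSum.IsInternal N)
    {f : V →ₗ[k] V} (hf : ∀ i, Set.MapsTo f (N i) (N i)) :
    f.charpoly = ∏ i, (f.restrict (hf i)).charpoly := by
  let b : ∀ i, Module.Basis (Fin (Module.finrank k (N i))) k (N i) := fun i => Module.finBasis k (N i)
  rw [← LinearMap.charpoly_toMatrix f (h.collectedBasis b),
    LinearMap.toMatrix_directSum_collectedBasis_eq_blockDiagonal' h h b b hf,
    my_charpoly_blockDiagonal']
  exact Finset.prod_congr rfl fun i _ => LinearMap.charpoly_toMatrix _ (b i)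

lemma my_charpoly_mul_comm {k : Type*} [Field k] {p q : Type} [Fintype p] [Fintype q]
    [DecidableEq p] [DecidableEq q] (M : Matrix p q k) (N : Matrix q p k) :
    (M * N).charpoly * X ^ Fintype.card q = (N * M).charpoly * X ^ Fintype.card p := by
  classical
  let K := FractionRing (Polynomial k)
  let φ : k[X] →+* K := algebraMap k[X] K
  have hinj : Function.Injective φ := IsFractionRing.injective k[X] K
  let ψ : k →+* K := φ.comp (C : k →+* k[X])
  set x : K := φ X with hxdef
  have hx : x ≠ 0 := fun h => X_ne_zero (hinj (by simpa using h))
  have key : ∀ (r : Type) (_ : Fintype r) (_ : DecidableEq r) (A : Matrix r r k),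
      φ A.charpoly = x ^ (Fintype.card r) * Matrix.det (1 - x⁻¹ • A.map ψ) := by
    intro r _ _ A
    rw [Matrix.charpoly, ← Matrix.det_smul]
    rw [RingHom.map_det]
    congr 1
    rw [Matrix.charmatrix]
    ext i j
    rcases eq_or_ne i j with rfl | hij
    · simp [Matrix.map_apply, Matrix.scalar_apply, Matrix.one_apply, ψ, smul_sub,
        Matrix.smul_apply, smul_smul, mul_inv_cancel₀ hx, Matrix.diagonal_apply_eq]
      rw [mul_sub, mul_one, ← mul_assoc, mul_inv_cancel₀ hx, one_mul]
    · simp [Matrix.map_apply, Matrix.scalar_apply, Matrix.one_apply, ψ, smul_sub,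
        Matrix.smul_apply, smul_smul, hij, Matrix.diagonal_apply_ne _ hij]
      rw [mul_neg, ← mul_assoc, mul_inv_cancel₀ hx, one_mul]
  apply hinj
  rw [_root_.map_mul, _root_.map_mul, map_pow, map_pow, key p _ _ (M * N), key q _ _ (N * M)]
  rw [Matrix.map_mul (L := M) (M := N) (f := ψ), Matrix.map_mul (L := N) (M := M) (f := ψ)]
  have h1 : (1 : Matrix p p K) - x⁻¹ • (M.map ψ * N.map ψ)
      = 1 - (x⁻¹ • M.map ψ) * N.map ψ := by rw [Matrix.smul_mul]
  have h2 : (1 : Matrix q q K) - x⁻¹ • (N.map ψ * M.map ψ)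
      = 1 - N.map ψ * (x⁻¹ • M.map ψ) := by rw [Matrix.mul_smul]
  rw [h1, h2, Matrix.det_one_sub_mul_comm]
  ring

lemma my_charpoly_comp {k M M' : Type*} [Field k] [AddCommGroup M] [Module k M]
    [FiniteDimensional k M] [AddCommGroup M'] [Module k M'] [FiniteDimensional k M']
    (f : M →ₗ[k] M') (g : M' →ₗ[k] M) :
    (g ∘ₗ f).charpoly * X ^ Module.finrank k M' =
      (f ∘ₗ g).charpoly * X ^ Module.finrank k M := by
  let bM := Module.finBasis k M
  let bM' := Module.finBasis k M'
  let A := LinearMap.toMatrix bM bM' f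
  let Bm := LinearMap.toMatrix bM' bM g
  have h1 : (g ∘ₗ f).charpoly = (Bm * A).charpoly := by
    rw [← LinearMap.charpoly_toMatrix (g ∘ₗ f) bM, LinearMap.toMatrix_comp bM bM' bM]
  have h2 : (f ∘ₗ g).charpoly = (A * Bm).charpoly := by
    rw [← LinearMap.charpoly_toMatrix (f ∘ₗ g) bM', LinearMap.toMatrix_comp bM' bM bM']
  rw [h1, h2]
  simpa using my_charpoly_mul_comm Bm A

/-- (graded form) Let `Λ` be a strict lattice sequence of period `e`
and `n` coprime to `e`; the graded space `⊕_{i ∈ ℤ/e} Λ(i)/Λ(i+1)` is modelled by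
an internal direct sum `V = ⊕_{i ∈ ℤ/e} W i` over the residue field `k`, and
`y_β = ϖⁿβᵉ` induces `B^e` where `B` shifts the grading by `-n`.  If `j` has
`dim W j` minimal, then the characteristic polynomial `φ_β` of `y_β` satisfies
`φ_β = φ_j^e · X^m` with `m = N - e·(dim W j)`, `φ_j` the characteristic polynomial
on the piece `W j`. -/
theorem stmt_12
    (k : Type) [Field k]
    (V : Type) [AddCommGroup V] [Module k V] [FiniteDimensional k V]
    (e : ℕ) (he : 0 < e) (n : ℕ) (hcop : Nat.Coprime e n)
    (W : ZMod e → Submodule k V)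
    (hsup : iSup W = ⊤)
    (hind : iSupIndep W)
    (B : V →ₗ[k] V)
    (hB : ∀ i : ZMod e, ∀ x ∈ W i, B x ∈ W (i - (n : ZMod e)))
    (j : ZMod e)
    (hmin : ∀ i : ZMod e, Module.finrank k (W j) ≤ Module.finrank k (W i))
    (hstab : ∀ x ∈ W j, (B ^ e) x ∈ W j) :
    (B ^ e).charpoly =
      ((B ^ e).restrict hstab).charpoly ^ e *
        X ^ (Module.finrank k V - e * Module.finrank k (W j)) := by
  haveI : NeZero e := ⟨he.ne'⟩
  set d : ZMod e → ℕ := fun i => Module.finrank k (W i) with hd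
  -- powers of B shift the grading
  have hpow : ∀ (t : ℕ) (i : ZMod e), ∀ x ∈ W i,
      (B ^ t) x ∈ W (i - (t : ZMod e) * (n : ZMod e)) := by
    intro t
    induction t with
    | zero => intro i x hx; simpa using hx
    | succ t ih =>
      intro i x hx
      have h1 : (B ^ (t + 1)) x = B ((B ^ t) x) := by
        rw [pow_succ', Module.End.mul_apply]
      have h2 : i - ((t : ZMod e) + 1) * (n : ZMod e)
          = (i - (t : ZMod e) * (n : ZMod e)) - (n : ZMod e) := by ring
      rw [h1]
      push_cast
      rw [h2]
      exact hB _ _ (ih i x hx)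
  have hf : ∀ i : ZMod e, Set.MapsTo (B ^ e) (W i) (W i) := by
    intro i x hx
    have := hpow e i x hx
    simpa [ZMod.natCast_self] using this
  have hInt : DirectSum.IsInternal W :=
    DirectSum.isInternal_submodule_of_iSupIndep_of_iSup_eq_top hind hsup
  set χ : ZMod e → k[X] := fun i => ((B ^ e).restrict (hf i)).charpoly with hχ
  -- rotation identity
  have hrot : ∀ t : ℕ, t ≤ e →
      χ j * X ^ d (j - (t : ZMod e) * (n : ZMod e))
        = χ (j - (t : ZMod e) * (n : ZMod e)) * X ^ d j := by
    intro t ht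
    set i := j - (t : ZMod e) * (n : ZMod e) with hi
    have h1 : ∀ x ∈ W j, (B ^ t) x ∈ W i := hpow t j
    have h2 : ∀ x ∈ W i, (B ^ (e - t)) x ∈ W j := by
      intro x hx
      have := hpow (e - t) i x hx
      have harith : i - ((e - t : ℕ) : ZMod e) * (n : ZMod e) = j := by
        rw [hi, Nat.cast_sub ht, ZMod.natCast_self]
        ring
      rwa [harith] at this
    set u : W j →ₗ[k] W i := (B ^ t).restrict h1 with hu
    set v : W i →ₗ[k] W j := (B ^ (e - t)).restrict h2 with hv
    have hvu : v ∘ₗ u = (B ^ e).restrict (hf j) := by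
      ext x
      simp only [LinearMap.comp_apply, LinearMap.restrict_apply, hu, hv]
      rw [← Module.End.mul_apply, ← pow_add, Nat.sub_add_cancel ht]
      rfl
    have huv : u ∘ₗ v = (B ^ e).restrict (hf i) := by
      ext x
      simp only [LinearMap.comp_apply, LinearMap.restrict_apply, hu, hv]
      rw [← Module.End.mul_apply, ← pow_add, Nat.add_sub_cancel' ht]
      rfl
    have := my_charpoly_comp u v
    rw [hvu, huv] at this
    simpa [hχ, hd] using this
  -- every χ i is χ j times a power of X
  have hkey : ∀ i : ZMod e, χ i = χ j * X ^ (d i - d j) := by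
    intro i
    obtain ⟨t, ht, hti⟩ : ∃ t : ℕ, t ≤ e ∧ i = j - (t : ZMod e) * (n : ZMod e) := by
      have hu : IsUnit (n : ZMod e) :=
        (ZMod.unitOfCoprime n hcop.symm).isUnit
      obtain ⟨w, hw⟩ := hu
      refine ⟨((j - i) * (↑w⁻¹ : ZMod e)).val, le_of_lt (ZMod.val_lt _), ?_⟩
      rw [ZMod.natCast_val, ZMod.cast_id, hw.symm]
      have : (j - i) * (↑w⁻¹ : ZMod e) * (↑w : ZMod e) = j - i := by
        rw [mul_assoc, Units.inv_mul, mul_one]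
      rw [this]; ring
    have h := hrot t ht
    rw [← hti] at h
    have hle : d j ≤ d i := hmin i
    have hXne : (X : k[X]) ^ d j ≠ 0 := pow_ne_zero _ X_ne_zero
    apply mul_right_cancel₀ hXne
    rw [← h, mul_assoc, ← pow_add, Nat.sub_add_cancel hle, mul_comm (χ j)]
  -- sum of dimensions
  have hdim : ∑ i : ZMod e, d i = Module.finrank k V := by
    classical
    let b : ∀ i : ZMod e, Module.Basis (Fin (d i)) k (W i) := fun i => Module.finBasis k (W i)
    rw [Module.finrank_eq_card_basis (hInt.collectedBasis b)]
    simp [Fintype.card_sigma]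
  -- assemble
  have hprod : (B ^ e).charpoly = ∏ i : ZMod e, χ i := my_charpoly_eq_prod hInt hf
  have hcard : Fintype.card (ZMod e) = e := ZMod.card e
  have hconst : ∑ _i : ZMod e, d j = e * d j := by
    rw [Finset.sum_const, Finset.card_univ, hcard, smul_eq_mul]
  have hsum : ∑ i : ZMod e, (d i - d j) = Module.finrank k V - e * d j := by
    rw [← hdim]
    have h3 : ∑ i : ZMod e, (d i - d j) + e * d j = ∑ i : ZMod e, d i := by
      rw [← hconst, ← Finset.sum_add_distrib]
      exact Finset.sum_congr rfl fun i _ => Nat.sub_add_cancel (hmin i)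
    omega
  calc (B ^ e).charpoly = ∏ i : ZMod e, χ i := hprod
    _ = ∏ i : ZMod e, (χ j * X ^ (d i - d j)) := by
        exact Finset.prod_congr rfl fun i _ => hkey i
    _ = (χ j) ^ e * X ^ (Module.finrank k V - e * d j) := by
        rw [Finset.prod_mul_distrib, Finset.prod_const, Finset.card_univ, hcard,
          Finset.prod_pow_eq_pow_sum, hsum]
    _ = ((B ^ e).restrict hstab).charpoly ^ e *
        X ^ (Module.finrank k V - e * Module.finrank k (W j)) := rfl
end
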